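/- arXiv:2604.08776 — 3 statements merged into one kernel-verified Lean document; each statement's English description precedes it below -/
import Mathlib

section
/- Let p be an odd prime, α ∈ ℤ_p^×, μ ≥ 0, k ≥ 1 with o_ᾱ | k, and let z = z^μ(α) be the unique maximal-valuation root of t_{o_ᾱ}(x) = det(g^{o_ᾱ}-1). Then for any β ∈ ℚ_p with v(β) > 2/(p-1) - μ, one has v(t_k(β)) = v(β - z) + 2v(k) + μ. -/
open Polynomial

/-- `r_k(x) = Σᵢ C(k,2i) α^{k-2i} p^{μi} x^i`. -/
noncomputable def rPoly (p : ℕ) [Fact p.Prime] (α : ℤ_[p]) (μ k : ℕ) : Polynomial ℤ_[p] :=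
  ∑ i ∈ Finset.range (k + 1),
    C ((k.choose (2 * i) : ℤ_[p]) * α ^ (k - 2 * i) * (p : ℤ_[p]) ^ (μ * i)) * X ^ i

/-- `s_k(x) = Σᵢ C(k,2i+1) α^{k-2i-1} p^{μi} x^i`. -/
noncomputable def sPoly (p : ℕ) [Fact p.Prime] (α : ℤ_[p]) (μ k : ℕ) : Polynomial ℤ_[p] :=
  ∑ i ∈ Finset.range (k + 1),
    C ((k.choose (2 * i + 1) : ℤ_[p]) * α ^ (k - (2 * i + 1)) * (p : ℤ_[p]) ^ (μ * i)) * X ^ i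

/-- `t_k(x) = det(g^k - 1) = (r_k(x) - 1)² - x p^μ s_k(x)²`. -/
noncomputable def tPoly (p : ℕ) [Fact p.Prime] (α : ℤ_[p]) (μ k : ℕ) : Polynomial ℤ_[p] :=
  (rPoly p α μ k - 1) ^ 2 - X * C ((p : ℤ_[p]) ^ μ) * (sPoly p α μ k) ^ 2

namespace S15
open Finset

variable {p : ℕ} [Fact p.Prime]

/-! ### Norm utilities -/

lemma abmap (x : ℤ_[p]) : algebraMap ℤ_[p] ℚ_[p] x = (x : ℚ_[p]) := rfl

lemma nmax (a b : ℚ_[p]) : ‖a + b‖ ≤ max ‖a‖ ‖b‖ := Padic.nonarchimedean a b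

lemma nmax_le {a b : ℚ_[p]} {C : ℝ} (ha : ‖a‖ ≤ C) (hb : ‖b‖ ≤ C) : ‖a + b‖ ≤ C :=
  le_trans (nmax a b) (max_le ha hb)

lemma nmax_sub_le {a b : ℚ_[p]} {C : ℝ} (ha : ‖a‖ ≤ C) (hb : ‖b‖ ≤ C) : ‖a - b‖ ≤ C := by
  rw [sub_eq_add_neg]; exact nmax_le ha (by rwa [norm_neg])

lemma ndom {a b : ℚ_[p]} (h : ‖b‖ < ‖a‖) : ‖a + b‖ = ‖a‖ := by
  rw [add_comm, Padic.add_eq_max_of_ne (ne_of_lt h)]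
  exact max_eq_right h.le

lemma ndom_sub {a b : ℚ_[p]} (h : ‖b‖ < ‖a‖) : ‖a - b‖ = ‖a‖ := by
  rw [sub_eq_add_neg]; exact ndom (by rwa [norm_neg])

lemma nsum_le {ι : Type*} {s : Finset ι} {f : ι → ℚ_[p]} {C : ℝ} (hC : 0 ≤ C)
    (h : ∀ i ∈ s, ‖f i‖ ≤ C) : ‖∑ i ∈ s, f i‖ ≤ C := by
  classical
  induction s using Finset.induction with
  | empty => simpa using hC
  | @insert a s' hx ih =>
    rw [Finset.sum_insert hx]
    exact nmax_le (h a (Finset.mem_insert_self a s'))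
      (ih fun i hi => h i (Finset.mem_insert_of_mem hi))

/-! ### The quadratic pair algebra -/

noncomputable def pmul (w : ℚ_[p]) (u v : ℚ_[p] × ℚ_[p]) : ℚ_[p] × ℚ_[p] :=
  (u.1 * v.1 + w * u.2 * v.2, u.1 * v.2 + u.2 * v.1)

noncomputable def ppow (w : ℚ_[p]) (u : ℚ_[p] × ℚ_[p]) : ℕ → ℚ_[p] × ℚ_[p]
  | 0 => (1, 0)
  | n + 1 => pmul w u (ppow w u n)

noncomputable def pgeo (w : ℚ_[p]) (u : ℚ_[p] × ℚ_[p]) : ℕ → ℚ_[p] × ℚ_[p]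
  | 0 => (0, 0)
  | n + 1 => ((pgeo w u n).1 + (ppow w u n).1, (pgeo w u n).2 + (ppow w u n).2)

noncomputable def pgeo2 (w : ℚ_[p]) (u : ℚ_[p] × ℚ_[p]) : ℕ → ℚ_[p] × ℚ_[p]
  | 0 => (0, 0)
  | n + 1 => ((pgeo2 w u n).1 + (pgeo w u n).1, (pgeo2 w u n).2 + (pgeo w u n).2)

@[simp] lemma ppow_zero (w : ℚ_[p]) (u : ℚ_[p] × ℚ_[p]) : ppow w u 0 = (1, 0) := rfl
@[simp] lemma ppow_succ (w : ℚ_[p]) (u : ℚ_[p] × ℚ_[p]) (n : ℕ) :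
    ppow w u (n + 1) = pmul w u (ppow w u n) := rfl
@[simp] lemma pgeo_zero (w : ℚ_[p]) (u : ℚ_[p] × ℚ_[p]) : pgeo w u 0 = (0, 0) := rfl
@[simp] lemma pgeo_succ (w : ℚ_[p]) (u : ℚ_[p] × ℚ_[p]) (n : ℕ) :
    pgeo w u (n + 1) = ((pgeo w u n).1 + (ppow w u n).1, (pgeo w u n).2 + (ppow w u n).2) := rfl
@[simp] lemma pgeo2_zero (w : ℚ_[p]) (u : ℚ_[p] × ℚ_[p]) : pgeo2 w u 0 = (0, 0) := rfl
@[simp] lemma pgeo2_succ (w : ℚ_[p]) (u : ℚ_[p] × ℚ_[p]) (n : ℕ) :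
    pgeo2 w u (n + 1) = ((pgeo2 w u n).1 + (pgeo w u n).1, (pgeo2 w u n).2 + (pgeo w u n).2) := rfl

lemma pmul_comm (w : ℚ_[p]) (u v : ℚ_[p] × ℚ_[p]) : pmul w u v = pmul w v u := by
  simp only [pmul, Prod.mk.injEq]; constructor <;> ring

lemma pmul_assoc (w : ℚ_[p]) (u v x : ℚ_[p] × ℚ_[p]) :
    pmul w (pmul w u v) x = pmul w u (pmul w v x) := by
  simp only [pmul, Prod.mk.injEq]; constructor <;> ring

lemma ppow_one (w : ℚ_[p]) (u : ℚ_[p] × ℚ_[p]) : ppow w u 1 = u := by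
  simp [pmul]

lemma ppow_add (w : ℚ_[p]) (u : ℚ_[p] × ℚ_[p]) (a b : ℕ) :
    ppow w u (a + b) = pmul w (ppow w u a) (ppow w u b) := by
  induction b with
  | zero => simp [pmul]
  | succ n ih =>
    rw [show a + (n + 1) = (a + n) + 1 by ring, ppow_succ, ih, ppow_succ,
      ← pmul_assoc, pmul_comm w u (ppow w u a), pmul_assoc]

lemma ppow_mul (w : ℚ_[p]) (u : ℚ_[p] × ℚ_[p]) (m n : ℕ) :
    ppow w u (m * n) = ppow w (ppow w u m) n := by
  induction n with
  | zero => simp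
  | succ n ih => rw [Nat.mul_succ, ppow_add, ih, ppow_succ, pmul_comm]

lemma geo1 (w : ℚ_[p]) (u : ℚ_[p] × ℚ_[p]) (n : ℕ) :
    (ppow w u n).1 - 1 = (u.1 - 1) * (pgeo w u n).1 + w * u.2 * (pgeo w u n).2 := by
  induction n with
  | zero => simp
  | succ n ih => simp only [ppow_succ, pgeo_succ, pmul]; linear_combination ih

lemma geo2 (w : ℚ_[p]) (u : ℚ_[p] × ℚ_[p]) (n : ℕ) :
    (ppow w u n).2 = u.2 * (pgeo w u n).1 + (u.1 - 1) * (pgeo w u n).2 := by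
  induction n with
  | zero => simp
  | succ n ih => simp only [ppow_succ, pgeo_succ, pmul]; linear_combination ih

lemma geo3 (w : ℚ_[p]) (u : ℚ_[p] × ℚ_[p]) (n : ℕ) :
    (pgeo w u n).1 - n = (u.1 - 1) * (pgeo2 w u n).1 + w * u.2 * (pgeo2 w u n).2 := by
  induction n with
  | zero => simp
  | succ n ih =>
    simp only [pgeo_succ, pgeo2_succ, Nat.cast_succ]
    linear_combination ih + geo1 w u n

/-- Norm-form multiplicativity along geometric sums. -/
lemma norm_geo (w : ℚ_[p]) (u : ℚ_[p] × ℚ_[p]) (n : ℕ) :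
    ((ppow w u n).1 - 1) ^ 2 - w * (ppow w u n).2 ^ 2 =
      ((u.1 - 1) ^ 2 - w * u.2 ^ 2) * ((pgeo w u n).1 ^ 2 - w * (pgeo w u n).2 ^ 2) := by
  rw [geo2 w u n]
  have h := geo1 w u n
  have : (ppow w u n).1 = 1 + ((u.1 - 1) * (pgeo w u n).1 + w * u.2 * (pgeo w u n).2) := by
    linear_combination h
  rw [this]; ring

lemma natnorm_le_one (n : ℕ) : ‖(n : ℚ_[p])‖ ≤ 1 := by
  have := Padic.norm_int_le_one (p := p) (n : ℤ)
  push_cast at this; exact this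

lemma natnorm_le_of_dvd {n : ℕ} (h : p ∣ n) : ‖(n : ℚ_[p])‖ ≤ (p : ℝ)⁻¹ := by
  obtain ⟨m, rfl⟩ := h
  push_cast
  rw [norm_mul, Padic.norm_p]
  calc (p:ℝ)⁻¹ * ‖(m : ℚ_[p])‖ ≤ (p:ℝ)⁻¹ * 1 := by
        have h0 : (0:ℝ) ≤ (p:ℝ)⁻¹ := by positivity
        exact mul_le_mul_of_nonneg_left (natnorm_le_one m) h0
    _ = (p:ℝ)⁻¹ := mul_one _

lemma natnorm_eq_one {n : ℕ} (h : ¬ p ∣ n) : ‖(n : ℚ_[p])‖ = 1 := by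
  have h1 : ¬ ‖((n : ℤ) : ℚ_[p])‖ < 1 := by
    rw [Padic.norm_intCast_lt_one_iff]
    exact fun hd => h (Int.natCast_dvd_natCast.mp hd)
  have h2 := Padic.norm_int_le_one (p := p) (n : ℤ)
  have : ‖((n : ℤ) : ℚ_[p])‖ = 1 := le_antisymm h2 (not_lt.mp h1)
  push_cast at this; exact this

/-! ### Norm estimates on pair sequences -/

section estimates
variable {w : ℚ_[p]} {u : ℚ_[p] × ℚ_[p]}
  (hx : ‖u.1 - 1‖ ≤ (p : ℝ)⁻¹) (hy : ‖u.2‖ ≤ 1) (hw : ‖w‖ ≤ (p : ℝ)⁻¹)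

lemma pinv_le_one : (p : ℝ)⁻¹ ≤ 1 := by
  have : (1:ℝ) ≤ (p:ℝ) := by exact_mod_cast (Fact.out : p.Prime).one_lt.le
  exact inv_le_one_of_one_le₀ this

lemma pinv_pos : (0:ℝ) < (p : ℝ)⁻¹ := by
  have : (0:ℝ) < (p:ℝ) := by exact_mod_cast (Fact.out : p.Prime).pos
  positivity

include hx in
lemma u1_le : ‖u.1‖ ≤ 1 := by
  have : u.1 = (u.1 - 1) + 1 := by ring
  rw [this]
  exact nmax_le (le_trans hx pinv_le_one) (by simp)

include hx hy hw in
lemma ppow_le (n : ℕ) : ‖(ppow w u n).1‖ ≤ 1 ∧ ‖(ppow w u n).2‖ ≤ 1 := by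
  induction n with
  | zero => simp
  | succ n ih =>
    obtain ⟨h1, h2⟩ := ih
    constructor
    · show ‖u.1 * (ppow w u n).1 + w * u.2 * (ppow w u n).2‖ ≤ 1
      refine nmax_le ?_ ?_
      · rw [norm_mul]; exact mul_le_one₀ (u1_le hx) (norm_nonneg _) h1
      · rw [norm_mul, norm_mul]
        have := le_trans hw pinv_le_one
        calc ‖w‖ * ‖u.2‖ * ‖(ppow w u n).2‖ ≤ 1 * 1 * 1 := by
              refine mul_le_mul (mul_le_mul this hy (norm_nonneg _) one_pos.le) h2 (norm_nonneg _) ?_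
              exact mul_nonneg one_pos.le one_pos.le |>.trans (by norm_num)
          _ = 1 := by norm_num
    · show ‖u.1 * (ppow w u n).2 + u.2 * (ppow w u n).1‖ ≤ 1
      refine nmax_le ?_ ?_
      · rw [norm_mul]; exact mul_le_one₀ (u1_le hx) (norm_nonneg _) h2
      · rw [norm_mul]; exact mul_le_one₀ hy (norm_nonneg _) h1

include hx hy hw in
lemma pgeo_le (n : ℕ) : ‖(pgeo w u n).1‖ ≤ 1 ∧ ‖(pgeo w u n).2‖ ≤ 1 := by
  induction n with
  | zero => simp
  | succ n ih =>
    obtain ⟨h1, h2⟩ := ih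
    obtain ⟨g1, g2⟩ := ppow_le hx hy hw n
    exact ⟨nmax_le h1 g1, nmax_le h2 g2⟩

include hx hy hw in
lemma pgeo2_le (n : ℕ) : ‖(pgeo2 w u n).1‖ ≤ 1 ∧ ‖(pgeo2 w u n).2‖ ≤ 1 := by
  induction n with
  | zero => simp
  | succ n ih =>
    obtain ⟨h1, h2⟩ := ih
    obtain ⟨g1, g2⟩ := pgeo_le hx hy hw n
    exact ⟨nmax_le h1 g1, nmax_le h2 g2⟩

omit hx hy hw in
lemma mul_small_le {a b : ℚ_[p]} (ha : ‖a‖ ≤ (p:ℝ)⁻¹) (hb : ‖b‖ ≤ 1) : ‖a * b‖ ≤ (p:ℝ)⁻¹ := by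
  rw [norm_mul]
  calc ‖a‖ * ‖b‖ ≤ (p:ℝ)⁻¹ * 1 := mul_le_mul ha hb (norm_nonneg _) pinv_pos.le
    _ = _ := mul_one _

include hx hy hw in
lemma ppow1_sub_one_le (n : ℕ) : ‖(ppow w u n).1 - 1‖ ≤ (p : ℝ)⁻¹ := by
  rw [geo1 w u n]
  refine nmax_le ?_ ?_
  · exact mul_small_le hx (pgeo_le hx hy hw n).1
  · rw [mul_assoc]
    refine mul_small_le hw ?_
    rw [norm_mul]
    exact mul_le_one₀ hy (norm_nonneg _) (pgeo_le hx hy hw n).2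

include hx hy hw in
lemma pgeo1_sub_le (n : ℕ) : ‖(pgeo w u n).1 - n‖ ≤ (p : ℝ)⁻¹ := by
  rw [geo3 w u n]
  refine nmax_le ?_ ?_
  · exact mul_small_le hx (pgeo2_le hx hy hw n).1
  · rw [mul_assoc]
    refine mul_small_le hw ?_
    rw [norm_mul]
    exact mul_le_one₀ hy (norm_nonneg _) (pgeo2_le hx hy hw n).2

include hx hy hw in
lemma ppow2_sub_le (n : ℕ) : ‖(ppow w u n).2 - n * u.2‖ ≤ (p : ℝ)⁻¹ := by
  induction n with
  | zero => simp [pinv_pos.le]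
  | succ n ih =>
    have key : (ppow w u (n+1)).2 - (n+1 : ℕ) * u.2 =
        ((ppow w u n).2 - n * u.2) + ((u.1 - 1) * (ppow w u n).2 + u.2 * ((ppow w u n).1 - 1)) := by
      show u.1 * (ppow w u n).2 + u.2 * (ppow w u n).1 - _ = _
      push_cast
      ring
    rw [key]
    refine nmax_le ih (nmax_le ?_ ?_)
    · exact mul_small_le hx (ppow_le hx hy hw n).2
    · rw [mul_comm]; exact mul_small_le (ppow1_sub_one_le hx hy hw n) hy

include hx hy hw in
lemma pgeo2'_sub_le (n : ℕ) : ‖(pgeo w u n).2 - (n.choose 2 : ℚ_[p]) * u.2‖ ≤ (p : ℝ)⁻¹ := by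
  induction n with
  | zero => simp [pinv_pos.le]
  | succ n ih =>
    have hch : ((n+1).choose 2 : ℚ_[p]) = (n.choose 2 : ℚ_[p]) + n := by
      rw [Nat.choose_succ_succ]
      push_cast [Nat.choose_one_right]
      ring
    have key : (pgeo w u (n+1)).2 - ((n+1).choose 2 : ℚ_[p]) * u.2 =
        ((pgeo w u n).2 - (n.choose 2 : ℚ_[p]) * u.2) + ((ppow w u n).2 - n * u.2) := by
      rw [hch]; show (pgeo w u n).2 + (ppow w u n).2 - _ = _; ring
    rw [key]
    exact nmax_le ih (ppow2_sub_le hx hy hw n)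

include hx hy hw in
lemma pgeo21_sub_le (n : ℕ) : ‖(pgeo2 w u n).1 - (n.choose 2 : ℚ_[p])‖ ≤ (p : ℝ)⁻¹ := by
  induction n with
  | zero => simp [pinv_pos.le]
  | succ n ih =>
    have hch : ((n+1).choose 2 : ℚ_[p]) = (n.choose 2 : ℚ_[p]) + n := by
      rw [Nat.choose_succ_succ]
      push_cast [Nat.choose_one_right]
      ring
    have key : (pgeo2 w u (n+1)).1 - ((n+1).choose 2 : ℚ_[p]) =
        ((pgeo2 w u n).1 - (n.choose 2 : ℚ_[p])) + ((pgeo w u n).1 - n) := by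
      rw [hch]; show (pgeo2 w u n).1 + (pgeo w u n).1 - _ = _; ring
    rw [key]
    exact nmax_le ih (pgeo1_sub_le hx hy hw n)

include hx hy hw in
lemma pgeo22_sub_le (n : ℕ) : ‖(pgeo2 w u n).2 - (n.choose 3 : ℚ_[p]) * u.2‖ ≤ (p : ℝ)⁻¹ := by
  induction n with
  | zero => simp [pinv_pos.le]
  | succ n ih =>
    have hch : ((n+1).choose 3 : ℚ_[p]) = (n.choose 3 : ℚ_[p]) + (n.choose 2 : ℚ_[p]) := by
      rw [Nat.choose_succ_succ]; push_cast; ring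
    have key : (pgeo2 w u (n+1)).2 - ((n+1).choose 3 : ℚ_[p]) * u.2 =
        ((pgeo2 w u n).2 - (n.choose 3 : ℚ_[p]) * u.2) +
          ((pgeo w u n).2 - (n.choose 2 : ℚ_[p]) * u.2) := by
      rw [hch]; show (pgeo2 w u n).2 + (pgeo w u n).2 - _ = _; ring
    rw [key]
    exact nmax_le ih (pgeo2'_sub_le hx hy hw n)

lemma pinv_lt_one : (p : ℝ)⁻¹ < 1 := by
  have h1 : (1:ℝ) < (p:ℝ) := by exact_mod_cast (Fact.out : p.Prime).one_lt
  rw [inv_lt_one_iff₀]; right; exact h1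

include hx hy hw in
lemma Gnorm_coprime {n : ℕ} (hn : ¬ p ∣ n) :
    ‖(pgeo w u n).1 ^ 2 - w * (pgeo w u n).2 ^ 2‖ = 1 := by
  have hc : ‖(pgeo w u n).1‖ = 1 := by
    have : (pgeo w u n).1 = (n : ℚ_[p]) + ((pgeo w u n).1 - n) := by ring
    rw [this]
    have hlt : ‖(pgeo w u n).1 - (n : ℚ_[p])‖ < ‖((n : ℚ_[p]))‖ := by
      rw [natnorm_eq_one hn]
      exact lt_of_le_of_lt (pgeo1_sub_le hx hy hw n) pinv_lt_one
    rw [ndom hlt]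
    exact natnorm_eq_one hn
  have h2 : ‖(pgeo w u n).2‖ ^ 2 ≤ 1 := by
    have := (pgeo_le hx hy hw n).2
    nlinarith [norm_nonneg (pgeo w u n).2]
  have hfin : ‖w * (pgeo w u n).2 ^ 2‖ < ‖(pgeo w u n).1 ^ 2‖ := by
    rw [norm_pow, hc, one_pow, norm_mul, norm_pow]
    calc ‖w‖ * ‖(pgeo w u n).2‖ ^ 2 ≤ (p:ℝ)⁻¹ * 1 :=
          mul_le_mul hw h2 (by positivity) pinv_pos.le
      _ < 1 := by rw [mul_one]; exact pinv_lt_one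
  rw [ndom_sub hfin, norm_pow, hc, one_pow]

include hx hy hw in
lemma Gnorm_p (hp2 : p ≠ 2)
    (hH3 : ‖w * u.2 ^ 2 * (p.choose 3 : ℚ_[p])‖ ≤ (p:ℝ)⁻¹ * (p:ℝ)⁻¹) :
    ‖(pgeo w u p).1 ^ 2 - w * (pgeo w u p).2 ^ 2‖ = ((p:ℝ)⁻¹) ^ 2 := by
  have hple : 2 < p := by
    rcases (Fact.out : p.Prime).two_le.lt_or_eq with h | h
    · exact h
    · exact absurd h.symm hp2
  have hch2 : p ∣ p.choose 2 := (Fact.out : p.Prime).dvd_choose_self (by norm_num) hple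
  have hcp : ‖(pgeo w u p).1 - p‖ ≤ (p:ℝ)⁻¹ * (p:ℝ)⁻¹ := by
    rw [geo3 w u p]
    refine nmax_le ?_ ?_
    · have hsplit : (pgeo2 w u p).1 = (p.choose 2 : ℚ_[p]) + ((pgeo2 w u p).1 - (p.choose 2 : ℚ_[p])) := by ring
      have h1 : ‖(pgeo2 w u p).1‖ ≤ (p:ℝ)⁻¹ := by
        rw [hsplit]
        exact nmax_le (natnorm_le_of_dvd hch2) (pgeo21_sub_le hx hy hw p)
      rw [norm_mul]
      exact mul_le_mul hx h1 (norm_nonneg _) pinv_pos.le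
    · have hsplit : w * u.2 * (pgeo2 w u p).2 =
          w * u.2 ^ 2 * (p.choose 3 : ℚ_[p]) +
            w * u.2 * ((pgeo2 w u p).2 - (p.choose 3 : ℚ_[p]) * u.2) := by ring
      rw [hsplit]
      refine nmax_le hH3 ?_
      rw [norm_mul, norm_mul]
      calc ‖w‖ * ‖u.2‖ * ‖(pgeo2 w u p).2 - (p.choose 3 : ℚ_[p]) * u.2‖
          ≤ ((p:ℝ)⁻¹ * 1) * (p:ℝ)⁻¹ := by
            refine mul_le_mul ?_ (pgeo22_sub_le hx hy hw p) (norm_nonneg _) (by positivity)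
            exact mul_le_mul hw hy (norm_nonneg _) pinv_pos.le
        _ = (p:ℝ)⁻¹ * (p:ℝ)⁻¹ := by ring
  have hc : ‖(pgeo w u p).1‖ = (p:ℝ)⁻¹ := by
    have : (pgeo w u p).1 = (p : ℚ_[p]) + ((pgeo w u p).1 - p) := by ring
    rw [this, ndom, Padic.norm_p]
    rw [Padic.norm_p]
    refine lt_of_le_of_lt hcp ?_
    calc (p:ℝ)⁻¹ * (p:ℝ)⁻¹ < 1 * (p:ℝ)⁻¹ := by
          exact mul_lt_mul_of_pos_right pinv_lt_one pinv_pos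
      _ = (p:ℝ)⁻¹ := one_mul _
  have hd : ‖(pgeo w u p).2‖ ≤ (p:ℝ)⁻¹ := by
    have : (pgeo w u p).2 = (p.choose 2 : ℚ_[p]) * u.2 + ((pgeo w u p).2 - (p.choose 2 : ℚ_[p]) * u.2) := by ring
    rw [this]
    refine nmax_le ?_ (pgeo2'_sub_le hx hy hw p)
    rw [norm_mul]
    calc ‖(p.choose 2 : ℚ_[p])‖ * ‖u.2‖ ≤ (p:ℝ)⁻¹ * 1 :=
          mul_le_mul (natnorm_le_of_dvd hch2) hy (norm_nonneg _) pinv_pos.le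
      _ = _ := mul_one _
  have hfin : ‖w * (pgeo w u p).2 ^ 2‖ < ((p:ℝ)⁻¹) ^ 2 := by
    rw [norm_mul, norm_pow]
    calc ‖w‖ * ‖(pgeo w u p).2‖ ^ 2 ≤ (p:ℝ)⁻¹ * ((p:ℝ)⁻¹) ^ 2 := by
          refine mul_le_mul hw ?_ (by positivity) pinv_pos.le
          exact pow_le_pow_left₀ (norm_nonneg _) hd 2
      _ < 1 * ((p:ℝ)⁻¹) ^ 2 := by
          refine mul_lt_mul_of_pos_right pinv_lt_one (by positivity)
      _ = _ := one_mul _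
  rw [ndom_sub (by rw [norm_pow, hc]; exact hfin), norm_pow, hc]

/-- The key valuation-multiplicativity result for norms of `det(g^m - 1)`. -/
lemma main2 (hp2 : p ≠ 2)
    (hδ3 : p = 3 → ‖(u.1 - 1) ^ 2 - w * u.2 ^ 2‖ ≤ ((p:ℝ)⁻¹) ^ 2)
    (hx : ‖u.1 - 1‖ ≤ (p : ℝ)⁻¹) (hy : ‖u.2‖ ≤ 1) (hw : ‖w‖ ≤ (p : ℝ)⁻¹) :
    ∀ m, 1 ≤ m → ‖((ppow w u m).1 - 1) ^ 2 - w * (ppow w u m).2 ^ 2‖ =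
      ‖(u.1 - 1) ^ 2 - w * u.2 ^ 2‖ * ((p:ℝ)⁻¹) ^ (2 * padicValNat p m) := by
  intro m
  induction m using Nat.strong_induction_on with
  | _ m ih =>
    intro hm
    by_cases hdvd : p ∣ m
    · obtain ⟨m', rfl⟩ := hdvd
      have hp1 : 1 < p := (Fact.out : p.Prime).one_lt
      have hm' : 1 ≤ m' := by
        rcases Nat.eq_zero_or_pos m' with h | h
        · subst h; simp at hm
        · exact h
      have hlt : m' < p * m' := by
        calc m' = 1 * m' := (one_mul m').symm
          _ < p * m' := by exact Nat.mul_lt_mul_of_lt_of_le hp1 (le_refl m') hm'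
      set u' := ppow w u m' with hu'
      have hx' : ‖u'.1 - 1‖ ≤ (p:ℝ)⁻¹ := ppow1_sub_one_le hx hy hw m'
      have hy' : ‖u'.2‖ ≤ 1 := (ppow_le hx hy hw m').2
      have IH := ih m' hlt hm'
      have hH3 : ‖w * u'.2 ^ 2 * (p.choose 3 : ℚ_[p])‖ ≤ (p:ℝ)⁻¹ * (p:ℝ)⁻¹ := by
        by_cases h3 : p = 3
        · have hch : (p.choose 3 : ℚ_[p]) = 1 := by subst h3; norm_num
          rw [hch, mul_one]
          have hsplit : w * u'.2 ^ 2 = (u'.1 - 1) ^ 2 - ((u'.1 - 1) ^ 2 - w * u'.2 ^ 2) := by ring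
          rw [hsplit]
          refine nmax_sub_le ?_ ?_
          · rw [norm_pow, sq]
            exact mul_le_mul hx' hx' (norm_nonneg _) pinv_pos.le
          · rw [IH]
            calc ‖(u.1 - 1) ^ 2 - w * u.2 ^ 2‖ * ((p:ℝ)⁻¹) ^ (2 * padicValNat p m')
                ≤ ((p:ℝ)⁻¹) ^ 2 * 1 := by
                  refine mul_le_mul (hδ3 h3) ?_ (by positivity) (by positivity)
                  exact pow_le_one₀ pinv_pos.le pinv_le_one
              _ = (p:ℝ)⁻¹ * (p:ℝ)⁻¹ := by rw [mul_one, sq]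
        · have hp5 : 3 < p := by
            have h2 := (Fact.out : p.Prime).two_le
            rcases Nat.lt_or_ge 3 p with h | h
            · exact h
            · interval_cases p
              · exact absurd rfl hp2
              · exact absurd rfl h3
          have hch3 : p ∣ p.choose 3 := (Fact.out : p.Prime).dvd_choose_self (by norm_num) hp5
          rw [norm_mul, norm_mul, norm_pow]
          calc ‖w‖ * ‖u'.2‖ ^ 2 * ‖(p.choose 3 : ℚ_[p])‖ ≤ ((p:ℝ)⁻¹ * 1) * (p:ℝ)⁻¹ := by
                refine mul_le_mul ?_ (natnorm_le_of_dvd hch3) (norm_nonneg _) (by positivity)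
                refine mul_le_mul hw ?_ (by positivity) pinv_pos.le
                exact pow_le_one₀ (norm_nonneg _) hy'
            _ = (p:ℝ)⁻¹ * (p:ℝ)⁻¹ := by ring
      have hG := Gnorm_p hx' hy' hw hp2 hH3
      have hpow : ppow w u (p * m') = ppow w u' p := by rw [mul_comm, ppow_mul]
      have hval : padicValNat p (p * m') = padicValNat p m' + 1 := by
        rw [padicValNat.mul (Nat.Prime.ne_zero Fact.out) (by omega), padicValNat.self hp1]
        ring
      rw [hpow, norm_geo w u' p, norm_mul, hG, IH, hval]
      ring
    · have hv : padicValNat p m = 0 := padicValNat.eq_zero_of_not_dvd hdvd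
      rw [norm_geo w u m, norm_mul, Gnorm_coprime hx hy hw hdvd, hv]
      simp

end estimates

/-! ### The binomial sums `R_k`, `S_k` -/

section RS
open Polynomial
variable (A w : ℚ_[p])

noncomputable def Rf (k : ℕ) : ℚ_[p] :=
  ∑ i ∈ Finset.range (k + 1), (k.choose (2 * i) : ℚ_[p]) * A ^ ((k : ℤ) - 2 * i) * w ^ i

noncomputable def Sf (k : ℕ) : ℚ_[p] :=
  ∑ i ∈ Finset.range (k + 1), (k.choose (2 * i + 1) : ℚ_[p]) * A ^ ((k : ℤ) - (2 * i + 1)) * w ^ i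

@[simp] lemma Rf_zero : Rf A w 0 = 1 := by simp [Rf]

@[simp] lemma Sf_zero : Sf A w 0 = 0 := by simp [Sf]

variable {A}

lemma Sf_succ (hA : A ≠ 0) (k : ℕ) : Sf A w (k + 1) = Rf A w k + A * Sf A w k := by
  have step : Sf A w (k + 1) =
      (∑ i ∈ Finset.range (k + 2), (k.choose (2 * i) : ℚ_[p]) * A ^ ((k : ℤ) - 2 * i) * w ^ i)
        + ∑ i ∈ Finset.range (k + 2),
            A * ((k.choose (2 * i + 1) : ℚ_[p]) * A ^ ((k : ℤ) - (2 * i + 1)) * w ^ i) := by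
    unfold Sf
    rw [← Finset.sum_add_distrib]
    refine Finset.sum_congr rfl ?_
    intro i hi
    have hch : (((k + 1).choose (2 * i + 1)) : ℚ_[p]) =
        (k.choose (2 * i) : ℚ_[p]) + (k.choose (2 * i + 1) : ℚ_[p]) := by
      rw [Nat.choose_succ_succ']; push_cast; ring
    have hz : A ^ (((k + 1 : ℕ) : ℤ) - (2 * i + 1)) = A ^ ((k : ℤ) - 2 * i) := by
      congr 1 <;> push_cast <;> ring_nf
    have hz2 : A ^ ((k : ℤ) - 2 * i) = A * A ^ ((k : ℤ) - (2 * i + 1)) := by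
      rw [show (k : ℤ) - 2 * i = ((k : ℤ) - (2 * i + 1)) + 1 by ring, zpow_add_one₀ hA]; ring
    rw [hch, hz, hz2]; ring
  have e1 : (∑ i ∈ Finset.range (k + 2), (k.choose (2 * i) : ℚ_[p]) * A ^ ((k : ℤ) - 2 * i) * w ^ i)
      = Rf A w k := by
    rw [Finset.sum_range_succ, Nat.choose_eq_zero_of_lt (show k < 2 * (k+1) by omega)]
    simp [Rf]
  have e2 : (∑ i ∈ Finset.range (k + 2),
        A * ((k.choose (2 * i + 1) : ℚ_[p]) * A ^ ((k : ℤ) - (2 * i + 1)) * w ^ i))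
      = A * Sf A w k := by
    rw [Finset.sum_range_succ, Nat.choose_eq_zero_of_lt (show k < 2 * (k+1) + 1 by omega)]
    simp [Sf, Finset.mul_sum]
  rw [step, e1, e2]

lemma Rf_succ (hA : A ≠ 0) (k : ℕ) : Rf A w (k + 1) = A * Rf A w k + w * Sf A w k := by
  have step : Rf A w (k + 1) =
      (∑ i ∈ Finset.range (k + 1),
        ((k.choose (2 * i + 1) : ℚ_[p]) * A ^ ((k : ℤ) - (2 * i + 1)) * w ^ (i + 1)
          + A * ((k.choose (2 * i + 2) : ℚ_[p]) * A ^ ((k : ℤ) - (2 * i + 2)) * w ^ (i + 1))))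
        + A ^ ((k : ℤ) + 1) := by
    unfold Rf
    rw [Finset.sum_range_succ' _ (k + 1)]
    refine congrArg₂ (· + ·) ?_ ?_
    · refine Finset.sum_congr rfl ?_
      intro i hi
      have h21 : 2 * (i + 1) = (2 * i + 1) + 1 := by ring
      have hch : (((k + 1).choose (2 * (i + 1))) : ℚ_[p]) =
          (k.choose (2 * i + 1) : ℚ_[p]) + (k.choose (2 * i + 2) : ℚ_[p]) := by
        rw [h21, Nat.choose_succ_succ']
        push_cast; try ring
      have hz : A ^ (((k + 1 : ℕ) : ℤ) - 2 * ((i + 1 : ℕ) : ℤ)) = A ^ ((k : ℤ) - (2 * i + 1)) := by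
        congr 1 <;> push_cast <;> ring_nf
      have hz2 : A ^ ((k : ℤ) - (2 * i + 1)) = A * A ^ ((k : ℤ) - (2 * i + 2)) := by
        rw [show (k : ℤ) - (2 * i + 1) = ((k : ℤ) - (2 * i + 2)) + 1 by ring, zpow_add_one₀ hA]; ring
      rw [hch, hz, hz2]; ring
    · have h1 : (((k + 1).choose (2 * 0)) : ℚ_[p]) = 1 := by norm_num
      have hz : A ^ (((k + 1 : ℕ) : ℤ) - 2 * ((0 : ℕ) : ℤ)) = A ^ ((k : ℤ) + 1) := by
        congr 1 <;> push_cast <;> ring_nf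
      rw [h1, hz]; ring
  have rhs1 : A * Rf A w k =
      (∑ i ∈ Finset.range k,
        A * ((k.choose (2 * i + 2) : ℚ_[p]) * A ^ ((k : ℤ) - (2 * i + 2)) * w ^ (i + 1)))
        + A ^ ((k : ℤ) + 1) := by
    unfold Rf
    rw [Finset.mul_sum, Finset.sum_range_succ' _ k]
    refine congrArg₂ (· + ·) ?_ ?_
    · refine Finset.sum_congr rfl ?_
      intro i hi
      have h22 : 2 * (i + 1) = 2 * i + 2 := by ring
      have hz : A ^ ((k : ℤ) - 2 * ((i + 1 : ℕ) : ℤ)) = A ^ ((k : ℤ) - (2 * i + 2)) := by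
        congr 1 <;> push_cast <;> ring_nf
      rw [h22, hz]
    · have h1 : ((k.choose (2 * 0)) : ℚ_[p]) = 1 := by norm_num
      have hz : A ^ ((k : ℤ) - 2 * ((0 : ℕ) : ℤ)) = A ^ ((k : ℤ)) := by congr 1 <;> push_cast <;> ring_nf
      rw [h1, hz, zpow_add_one₀ hA] <;> ring
  have rhs2 : w * Sf A w k =
      ∑ i ∈ Finset.range (k + 1),
        (k.choose (2 * i + 1) : ℚ_[p]) * A ^ ((k : ℤ) - (2 * i + 1)) * w ^ (i + 1) := by
    rw [Sf, Finset.mul_sum]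
    refine Finset.sum_congr rfl ?_
    intro i hi; ring
  have hgg : (∑ i ∈ Finset.range (k + 1),
        A * ((k.choose (2 * i + 2) : ℚ_[p]) * A ^ ((k : ℤ) - (2 * i + 2)) * w ^ (i + 1)))
      = ∑ i ∈ Finset.range k,
        A * ((k.choose (2 * i + 2) : ℚ_[p]) * A ^ ((k : ℤ) - (2 * i + 2)) * w ^ (i + 1)) := by
    rw [Finset.sum_range_succ]
    have : (k.choose (2 * k + 2) : ℚ_[p]) = 0 := by
      rw [Nat.choose_eq_zero_of_lt (by omega)]; simp
    rw [this]; ring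
  rw [step, rhs1, rhs2, Finset.sum_add_distrib, hgg]
  ring

lemma RS_add (hA : A ≠ 0) (a b : ℕ) :
    Rf A w (a + b) = Rf A w a * Rf A w b + w * Sf A w a * Sf A w b ∧
    Sf A w (a + b) = Rf A w a * Sf A w b + Sf A w a * Rf A w b := by
  induction b with
  | zero => constructor <;> simp
  | succ n ih =>
    obtain ⟨ih1, ih2⟩ := ih
    have e : a + (n + 1) = (a + n) + 1 := by ring
    constructor
    · rw [e, Rf_succ w hA (k := a + n), Rf_succ w hA (k := n), Sf_succ w hA (k := n)]
      linear_combination A * ih1 + w * ih2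
    · rw [e, Sf_succ w hA (k := a + n), Rf_succ w hA (k := n), Sf_succ w hA (k := n)]
      linear_combination ih1 + A * ih2

lemma RS_ppow (hA : A ≠ 0) (o : ℕ) (n : ℕ) :
    Rf A w (o * n) = (ppow w (Rf A w o, Sf A w o) n).1 ∧
    Sf A w (o * n) = (ppow w (Rf A w o, Sf A w o) n).2 := by
  induction n with
  | zero => simp
  | succ n ih =>
    obtain ⟨ih1, ih2⟩ := ih
    have e : o * (n + 1) = o * n + o := by ring
    obtain ⟨h1, h2⟩ := RS_add w hA (o * n) o
    rw [e, h1, h2, ppow_succ, pmul, ih1, ih2]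
    constructor <;> · simp only []; ring

end RS

/-! ### Evaluation of the mapped polynomials -/

section eval
open Polynomial

lemma eval_rPoly_map (α : ℤ_[p]) (μ : ℕ) (β : ℚ_[p]) (k : ℕ) :
    Polynomial.eval β ((rPoly p α μ k).map (algebraMap ℤ_[p] ℚ_[p])) =
      Rf (α : ℚ_[p]) ((p : ℚ_[p]) ^ μ * β) k := by
  unfold rPoly Rf
  rw [Polynomial.map_sum, Polynomial.eval_finset_sum]
  refine Finset.sum_congr rfl ?_
  intro i hi
  rw [Polynomial.map_mul, Polynomial.map_pow, Polynomial.map_X, Polynomial.map_C,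
    Polynomial.eval_mul, Polynomial.eval_pow, Polynomial.eval_X, Polynomial.eval_C]
  show (((k.choose (2 * i) : ℤ_[p]) * α ^ (k - 2 * i) * (p : ℤ_[p]) ^ (μ * i) : ℤ_[p]) : ℚ_[p]) * β ^ i = _
  push_cast
  by_cases h : 2 * i ≤ k
  · have hz : ((α : ℚ_[p])) ^ ((k : ℤ) - 2 * i) = ((α : ℚ_[p])) ^ ((k - 2 * i : ℕ)) := by
      rw [← zpow_natCast]; congr 1; omega
    rw [hz, mul_pow, ← pow_mul]
    ring
  · rw [Nat.choose_eq_zero_of_lt (by omega)]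
    simp

lemma eval_sPoly_map (α : ℤ_[p]) (μ : ℕ) (β : ℚ_[p]) (k : ℕ) :
    Polynomial.eval β ((sPoly p α μ k).map (algebraMap ℤ_[p] ℚ_[p])) =
      Sf (α : ℚ_[p]) ((p : ℚ_[p]) ^ μ * β) k := by
  unfold sPoly Sf
  rw [Polynomial.map_sum, Polynomial.eval_finset_sum]
  refine Finset.sum_congr rfl ?_
  intro i hi
  rw [Polynomial.map_mul, Polynomial.map_pow, Polynomial.map_X, Polynomial.map_C,
    Polynomial.eval_mul, Polynomial.eval_pow, Polynomial.eval_X, Polynomial.eval_C]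
  show (((k.choose (2 * i + 1) : ℤ_[p]) * α ^ (k - (2 * i + 1)) * (p : ℤ_[p]) ^ (μ * i) : ℤ_[p]) : ℚ_[p]) * β ^ i = _
  push_cast
  by_cases h : 2 * i + 1 ≤ k
  · have hz : ((α : ℚ_[p])) ^ ((k : ℤ) - (2 * i + 1)) = ((α : ℚ_[p])) ^ ((k - (2 * i + 1) : ℕ)) := by
      rw [← zpow_natCast]; congr 1; omega
    rw [hz, mul_pow, ← pow_mul]
    ring
  · rw [Nat.choose_eq_zero_of_lt (by omega)]
    simp

lemma eval_tPoly_map (α : ℤ_[p]) (μ : ℕ) (β : ℚ_[p]) (k : ℕ) :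
    Polynomial.eval β ((tPoly p α μ k).map (algebraMap ℤ_[p] ℚ_[p])) =
      (Rf (α : ℚ_[p]) ((p : ℚ_[p]) ^ μ * β) k - 1) ^ 2 -
        ((p : ℚ_[p]) ^ μ * β) * (Sf (α : ℚ_[p]) ((p : ℚ_[p]) ^ μ * β) k) ^ 2 := by
  unfold tPoly
  rw [Polynomial.map_sub, Polynomial.map_pow, Polynomial.map_sub, Polynomial.map_one,
    Polynomial.map_mul, Polynomial.map_mul, Polynomial.map_X, Polynomial.map_C, Polynomial.map_pow]
  rw [Polynomial.eval_sub, Polynomial.eval_pow, Polynomial.eval_sub, Polynomial.eval_one,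
    Polynomial.eval_mul, Polynomial.eval_mul, Polynomial.eval_X, Polynomial.eval_pow,
    Polynomial.eval_C, eval_rPoly_map, eval_sPoly_map]
  rw [map_pow, map_natCast]
  ring

end eval

/-! ### Coefficient bounds -/

section coeffs
open Polynomial

lemma coeff_rPoly_map (α : ℤ_[p]) (μ k j : ℕ) :
    ((rPoly p α μ k).map (algebraMap ℤ_[p] ℚ_[p])).coeff j =
      if j ≤ k then (k.choose (2 * j) : ℚ_[p]) * (α : ℚ_[p]) ^ (k - 2 * j) * (p : ℚ_[p]) ^ (μ * j)
      else 0 := by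
  unfold rPoly
  rw [Polynomial.map_sum, Polynomial.finset_sum_coeff]
  have e1 : ∀ i ∈ Finset.range (k + 1),
      (((C ((k.choose (2 * i) : ℤ_[p]) * α ^ (k - 2 * i) * (p : ℤ_[p]) ^ (μ * i)) * X ^ i).map
          (algebraMap ℤ_[p] ℚ_[p])).coeff j) =
        if i = j then (k.choose (2 * i) : ℚ_[p]) * (α : ℚ_[p]) ^ (k - 2 * i) * (p : ℚ_[p]) ^ (μ * i)
        else 0 := by
    intro i hi
    rw [Polynomial.map_mul, Polynomial.map_pow, Polynomial.map_X, Polynomial.map_C,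
      Polynomial.coeff_C_mul, Polynomial.coeff_X_pow]
    by_cases h : j = i
    · subst h; simp only [if_pos rfl, mul_one, abmap]
      push_cast; ring
    · rw [if_neg h, if_neg (fun hh => h hh.symm), mul_zero]
  rw [Finset.sum_congr rfl e1, Finset.sum_ite_eq' (Finset.range (k + 1)) j]
  simp only [Finset.mem_range, Nat.lt_succ_iff]

lemma coeff_sPoly_map (α : ℤ_[p]) (μ k j : ℕ) :
    ((sPoly p α μ k).map (algebraMap ℤ_[p] ℚ_[p])).coeff j =
      if j ≤ k then (k.choose (2 * j + 1) : ℚ_[p]) * (α : ℚ_[p]) ^ (k - (2 * j + 1)) * (p : ℚ_[p]) ^ (μ * j)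
      else 0 := by
  unfold sPoly
  rw [Polynomial.map_sum, Polynomial.finset_sum_coeff]
  have e1 : ∀ i ∈ Finset.range (k + 1),
      (((C ((k.choose (2 * i + 1) : ℤ_[p]) * α ^ (k - (2 * i + 1)) * (p : ℤ_[p]) ^ (μ * i)) * X ^ i).map
          (algebraMap ℤ_[p] ℚ_[p])).coeff j) =
        if i = j then (k.choose (2 * i + 1) : ℚ_[p]) * (α : ℚ_[p]) ^ (k - (2 * i + 1)) * (p : ℚ_[p]) ^ (μ * i)
        else 0 := by
    intro i hi
    rw [Polynomial.map_mul, Polynomial.map_pow, Polynomial.map_X, Polynomial.map_C,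
      Polynomial.coeff_C_mul, Polynomial.coeff_X_pow]
    by_cases h : j = i
    · subst h; simp only [if_pos rfl, mul_one, abmap]
      push_cast; ring
    · rw [if_neg h, if_neg (fun hh => h hh.symm), mul_zero]
  rw [Finset.sum_congr rfl e1, Finset.sum_ite_eq' (Finset.range (k + 1)) j]
  simp only [Finset.mem_range, Nat.lt_succ_iff]

lemma norm_padic_coe_le (x : ℤ_[p]) : ‖(x : ℚ_[p])‖ ≤ 1 := by
  rw [PadicInt.padic_norm_e_of_padicInt]; exact x.norm_le_one

lemma norm_coeff_rPoly (α : ℤ_[p]) (μ k j : ℕ) :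
    ‖((rPoly p α μ k).map (algebraMap ℤ_[p] ℚ_[p])).coeff j‖ ≤ ((p : ℝ)⁻¹) ^ (μ * j) := by
  rw [coeff_rPoly_map]
  split
  · rw [norm_mul, norm_mul, norm_pow, norm_pow, Padic.norm_p]
    calc ‖(k.choose (2 * j) : ℚ_[p])‖ * ‖(α : ℚ_[p])‖ ^ (k - 2 * j) * ((p:ℝ)⁻¹) ^ (μ * j)
        ≤ 1 * 1 * ((p:ℝ)⁻¹) ^ (μ * j) := by
          refine mul_le_mul ?_ le_rfl (by positivity) (by norm_num)
          refine mul_le_mul (natnorm_le_one _) ?_ (by positivity) (by norm_num)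
          exact pow_le_one₀ (norm_nonneg _) (norm_padic_coe_le α)
      _ = ((p:ℝ)⁻¹) ^ (μ * j) := by ring
  · rw [norm_zero]; positivity

lemma norm_coeff_sPoly (α : ℤ_[p]) (μ k j : ℕ) :
    ‖((sPoly p α μ k).map (algebraMap ℤ_[p] ℚ_[p])).coeff j‖ ≤ ((p : ℝ)⁻¹) ^ (μ * j) := by
  rw [coeff_sPoly_map]
  split
  · rw [norm_mul, norm_mul, norm_pow, norm_pow, Padic.norm_p]
    calc ‖(k.choose (2 * j + 1) : ℚ_[p])‖ * ‖(α : ℚ_[p])‖ ^ (k - (2 * j + 1)) * ((p:ℝ)⁻¹) ^ (μ * j)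
        ≤ 1 * 1 * ((p:ℝ)⁻¹) ^ (μ * j) := by
          refine mul_le_mul ?_ le_rfl (by positivity) (by norm_num)
          refine mul_le_mul (natnorm_le_one _) ?_ (by positivity) (by norm_num)
          exact pow_le_one₀ (norm_nonneg _) (norm_padic_coe_le α)
      _ = ((p:ℝ)⁻¹) ^ (μ * j) := by ring
  · rw [norm_zero]; positivity

end coeffs

/-! ### Coefficient bounds for `tPoly`, and the Newton-polygon lemma -/

section tcoeffs
open Polynomial

lemma intnorm_le_of_dvd {x : ℤ_[p]} (h : (p : ℤ_[p]) ∣ x) : ‖(x : ℚ_[p])‖ ≤ (p : ℝ)⁻¹ := by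
  obtain ⟨y, rfl⟩ := h
  push_cast
  rw [norm_mul, Padic.norm_p]
  calc (p:ℝ)⁻¹ * ‖(y : ℚ_[p])‖ ≤ (p:ℝ)⁻¹ * 1 :=
        mul_le_mul_of_nonneg_left (norm_padic_coe_le y) pinv_pos.le
    _ = (p:ℝ)⁻¹ := mul_one _

lemma tPoly_map_eq (α : ℤ_[p]) (μ k : ℕ) :
    (tPoly p α μ k).map (algebraMap ℤ_[p] ℚ_[p]) =
      ((rPoly p α μ k).map (algebraMap ℤ_[p] ℚ_[p]) - 1) ^ 2 -
        X * C ((p : ℚ_[p]) ^ μ) * ((sPoly p α μ k).map (algebraMap ℤ_[p] ℚ_[p])) ^ 2 := by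
  unfold tPoly
  rw [Polynomial.map_sub, Polynomial.map_pow, Polynomial.map_sub, Polynomial.map_one,
    Polynomial.map_mul, Polynomial.map_mul, Polynomial.map_X, Polynomial.map_C, Polynomial.map_pow]
  have : (algebraMap ℤ_[p] ℚ_[p]) ((p : ℤ_[p]) ^ μ) = (p : ℚ_[p]) ^ μ := by
    rw [map_pow, map_natCast]
  rw [this]

lemma norm_coeff_rPoly_sub_one (α : ℤ_[p]) (μ k j : ℕ) :
    ‖((rPoly p α μ k).map (algebraMap ℤ_[p] ℚ_[p]) - 1).coeff j‖ ≤ ((p : ℝ)⁻¹) ^ (μ * j) := by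
  rw [Polynomial.coeff_sub]
  rcases j with _ | j
  · rw [Polynomial.coeff_one_zero]
    refine nmax_sub_le ?_ (by norm_num)
    simpa using norm_coeff_rPoly α μ k 0
  · rw [Polynomial.coeff_one, if_neg (by omega), sub_zero]
    exact norm_coeff_rPoly α μ k (j+1)

lemma norm_coeff_sq_le {Q : Polynomial ℚ_[p]} {μ : ℕ}
    (hQ : ∀ j, ‖Q.coeff j‖ ≤ ((p : ℝ)⁻¹) ^ (μ * j)) (j : ℕ) :
    ‖(Q ^ 2).coeff j‖ ≤ ((p : ℝ)⁻¹) ^ (μ * j) := by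
  rw [sq, Polynomial.coeff_mul]
  refine nsum_le (by positivity) ?_
  intro x hx
  rw [Finset.HasAntidiagonal.mem_antidiagonal] at hx
  rw [norm_mul]
  calc ‖Q.coeff x.1‖ * ‖Q.coeff x.2‖ ≤ ((p:ℝ)⁻¹) ^ (μ * x.1) * ((p:ℝ)⁻¹) ^ (μ * x.2) :=
        mul_le_mul (hQ x.1) (hQ x.2) (norm_nonneg _) (by positivity)
    _ = ((p:ℝ)⁻¹) ^ (μ * j) := by rw [← pow_add, ← Nat.mul_add, hx]

lemma norm_coeff_tPoly (α : ℤ_[p]) (μ k j : ℕ) :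
    ‖((tPoly p α μ k).map (algebraMap ℤ_[p] ℚ_[p])).coeff j‖ ≤ ((p : ℝ)⁻¹) ^ (μ * j) := by
  rw [tPoly_map_eq, Polynomial.coeff_sub]
  refine nmax_sub_le (norm_coeff_sq_le (norm_coeff_rPoly_sub_one α μ k) j) ?_
  have hcomm : X * C ((p : ℚ_[p]) ^ μ) * ((sPoly p α μ k).map (algebraMap ℤ_[p] ℚ_[p])) ^ 2 =
      C ((p : ℚ_[p]) ^ μ) * (X * ((sPoly p α μ k).map (algebraMap ℤ_[p] ℚ_[p])) ^ 2) := by ring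
  rw [hcomm, Polynomial.coeff_C_mul]
  rcases j with _ | j
  · rw [Polynomial.mul_coeff_zero, Polynomial.coeff_X_zero]
    simp
  · rw [Polynomial.coeff_X_mul, norm_mul, norm_pow, Padic.norm_p]
    calc ((p:ℝ)⁻¹) ^ μ * ‖(((sPoly p α μ k).map (algebraMap ℤ_[p] ℚ_[p])) ^ 2).coeff j‖
        ≤ ((p:ℝ)⁻¹) ^ μ * ((p:ℝ)⁻¹) ^ (μ * j) :=
          mul_le_mul_of_nonneg_left (norm_coeff_sq_le (norm_coeff_sPoly α μ k) j) (by positivity)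
      _ = ((p:ℝ)⁻¹) ^ (μ * (j+1)) := by rw [← pow_add]; congr 1; ring

lemma coeff_tPoly_zero (α : ℤ_[p]) (μ k : ℕ) :
    ((tPoly p α μ k).map (algebraMap ℤ_[p] ℚ_[p])).coeff 0 = ((α : ℚ_[p]) ^ k - 1) ^ 2 := by
  rw [tPoly_map_eq, Polynomial.coeff_sub]
  have h1 : (((rPoly p α μ k).map (algebraMap ℤ_[p] ℚ_[p]) - 1)).coeff 0 = (α : ℚ_[p]) ^ k - 1 := by
    rw [Polynomial.coeff_sub, Polynomial.coeff_one_zero, coeff_rPoly_map, if_pos (Nat.zero_le k)]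
    norm_num
  rw [sq, Polynomial.mul_coeff_zero, h1, ← sq]
  have hcomm : X * C ((p : ℚ_[p]) ^ μ) * ((sPoly p α μ k).map (algebraMap ℤ_[p] ℚ_[p])) ^ 2 =
      C ((p : ℚ_[p]) ^ μ) * (X * ((sPoly p α μ k).map (algebraMap ℤ_[p] ℚ_[p])) ^ 2) := by ring
  rw [hcomm, Polynomial.coeff_C_mul, Polynomial.mul_coeff_zero, Polynomial.coeff_X_zero]
  ring

lemma norm_coeff_tPoly_one (α : ℤ_[p]) (hα : IsUnit α) (μ k : ℕ)
    (hdvd : (p : ℤ_[p]) ∣ α ^ k - 1) (hk : ¬ p ∣ k) :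
    ‖((tPoly p α μ k).map (algebraMap ℤ_[p] ℚ_[p])).coeff 1‖ = ((p : ℝ)⁻¹) ^ μ := by
  have hαn : ‖(α : ℚ_[p])‖ = 1 := by
    rw [PadicInt.padic_norm_e_of_padicInt]; exact PadicInt.isUnit_iff.mp hα
  set RP1 := (rPoly p α μ k).map (algebraMap ℤ_[p] ℚ_[p]) - 1 with hRP1
  have hc0 : ‖RP1.coeff 0‖ ≤ (p:ℝ)⁻¹ := by
    have e : RP1.coeff 0 = (((α ^ k - 1 : ℤ_[p])) : ℚ_[p]) := by
      rw [hRP1, Polynomial.coeff_sub, Polynomial.coeff_one_zero, coeff_rPoly_map,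
        if_pos (Nat.zero_le k)]
      push_cast
      norm_num
    rw [e]
    exact intnorm_le_of_dvd hdvd
  have hc1 : ‖RP1.coeff 1‖ ≤ ((p:ℝ)⁻¹) ^ μ := by
    have h := norm_coeff_rPoly_sub_one α μ k 1
    rw [Nat.mul_one] at h
    exact h
  -- the square part
  have hsq1 : ‖(RP1 ^ 2).coeff 1‖ ≤ (p:ℝ)⁻¹ * ((p:ℝ)⁻¹) ^ μ := by
    rw [sq, Polynomial.coeff_mul, Finset.Nat.sum_antidiagonal_eq_sum_range_succ_mk,
      Finset.sum_range_succ, Finset.sum_range_one]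
    refine nmax_le ?_ ?_
    · show ‖RP1.coeff 0 * RP1.coeff 1‖ ≤ _
      rw [norm_mul]
      exact mul_le_mul hc0 hc1 (norm_nonneg _) pinv_pos.le
    · show ‖RP1.coeff 1 * RP1.coeff 0‖ ≤ _
      rw [norm_mul, mul_comm]
      exact mul_le_mul hc0 hc1 (norm_nonneg _) pinv_pos.le
  -- the X-part
  have hXs : ‖(X * C ((p : ℚ_[p]) ^ μ) * ((sPoly p α μ k).map (algebraMap ℤ_[p] ℚ_[p])) ^ 2).coeff 1‖
      = ((p:ℝ)⁻¹) ^ μ := by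
    have hcomm : X * C ((p : ℚ_[p]) ^ μ) * ((sPoly p α μ k).map (algebraMap ℤ_[p] ℚ_[p])) ^ 2 =
        C ((p : ℚ_[p]) ^ μ) * (X * ((sPoly p α μ k).map (algebraMap ℤ_[p] ℚ_[p])) ^ 2) := by ring
    have hS0 : ((sPoly p α μ k).map (algebraMap ℤ_[p] ℚ_[p])).coeff 0 = (k : ℚ_[p]) * (α : ℚ_[p]) ^ (k - 1) := by
      rw [coeff_sPoly_map, if_pos (Nat.zero_le k)]
      norm_num [Nat.choose_one_right]
    rw [hcomm, Polynomial.coeff_C_mul, Polynomial.coeff_X_mul, sq, Polynomial.mul_coeff_zero, hS0]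
    simp [norm_mul, norm_pow, Padic.norm_p, natnorm_eq_one (p := p) hk, hαn]
  rw [tPoly_map_eq, Polynomial.coeff_sub, ← hRP1]
  rw [norm_sub_rev, ndom_sub (by rw [hXs]; exact lt_of_le_of_lt hsq1 (by
    calc (p:ℝ)⁻¹ * ((p:ℝ)⁻¹) ^ μ < 1 * ((p:ℝ)⁻¹) ^ μ :=
        mul_lt_mul_of_pos_right pinv_lt_one (pow_pos pinv_pos μ)
      _ = ((p:ℝ)⁻¹) ^ μ := one_mul _)), hXs]

end tcoeffs

/-! ### Part 1: the Newton polygon estimate -/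

section part1
open Polynomial

lemma part1 {T : Polynomial ℚ_[p]} {β z : ℚ_[p]} {μ : ℕ}
    (hzero : Polynomial.eval z T = 0)
    (hβb : ‖β‖ ≤ (p:ℝ) ^ ((μ:ℤ) - 1)) (hzb : ‖z‖ ≤ (p:ℝ) ^ ((μ:ℤ) - 1))
    (hcoeff : ∀ j, ‖T.coeff j‖ ≤ ((p:ℝ)⁻¹) ^ (μ * j))
    (hc1 : ‖T.coeff 1‖ = ((p:ℝ)⁻¹) ^ μ) :
    ‖Polynomial.eval β T‖ = ‖β - z‖ * ((p:ℝ)⁻¹) ^ μ := by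
  have hq : (1:ℝ) < p := by exact_mod_cast (Fact.out : p.Prime).one_lt
  have hq0 : (0:ℝ) < p := lt_trans one_pos hq
  set D := T.natDegree with hD
  have hmem : 1 ∈ Finset.range (D + 1) := by
    rw [Finset.mem_range, Nat.lt_succ_iff, hD]
    refine Polynomial.le_natDegree_of_ne_zero ?_
    intro h
    rw [h, norm_zero] at hc1
    have := pow_pos (pinv_pos (p := p)) μ
    linarith [hc1]
  set f : ℕ → ℚ_[p] := fun j => T.coeff j * ∑ i ∈ Finset.range j, β ^ i * z ^ (j - 1 - i) with hf
  have key : Polynomial.eval β T = (β - z) * ∑ j ∈ Finset.range (D + 1), f j := by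
    have h1 : Polynomial.eval β T = Polynomial.eval β T - Polynomial.eval z T := by
      rw [hzero, sub_zero]
    rw [h1, Polynomial.eval_eq_sum_range, Polynomial.eval_eq_sum_range (x := z),
      ← Finset.sum_sub_distrib, Finset.mul_sum]
    refine Finset.sum_congr rfl ?_
    intro j hj
    have hg := geom_sum₂_mul β z j
    calc T.coeff j * β ^ j - T.coeff j * z ^ j = T.coeff j * (β ^ j - z ^ j) := by ring
      _ = T.coeff j * ((∑ i ∈ Finset.range j, β ^ i * z ^ (j - 1 - i)) * (β - z)) := by rw [hg]
      _ = (β - z) * f j := by rw [hf]; ring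
  have hbig : ∀ j ∈ Finset.range (D + 1) \ {1}, ‖f j‖ ≤ ((p:ℝ)⁻¹) ^ μ * (p:ℝ)⁻¹ := by
    intro j hj
    rw [Finset.mem_sdiff, Finset.mem_singleton] at hj
    rcases j with _ | _ | jj
    · have : f 0 = 0 := by simp [hf]
      rw [this, norm_zero]
      positivity
    · exact absurd rfl hj.2
    · set j := jj + 2 with hj2
      have hj1 : ((j - 1 : ℕ) : ℤ) = (j : ℤ) - 1 := by omega
      have hinner : ‖∑ i ∈ Finset.range j, β ^ i * z ^ (j - 1 - i)‖ ≤
          (p:ℝ) ^ (((μ:ℤ) - 1) * ((j : ℤ) - 1)) := by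
        refine nsum_le (by positivity) ?_
        intro i hi
        rw [Finset.mem_range] at hi
        rw [norm_mul, norm_pow, norm_pow]
        have hstep : ‖β‖ ^ i * ‖z‖ ^ (j - 1 - i) ≤
            ((p:ℝ) ^ ((μ:ℤ) - 1)) ^ i * ((p:ℝ) ^ ((μ:ℤ) - 1)) ^ (j - 1 - i) :=
          mul_le_mul (pow_le_pow_left₀ (norm_nonneg _) hβb i)
            (pow_le_pow_left₀ (norm_nonneg _) hzb _) (by positivity) (by positivity)
        refine le_trans hstep (le_of_eq ?_)
        rw [← zpow_natCast ((p:ℝ) ^ ((μ:ℤ) - 1)) i, ← zpow_natCast ((p:ℝ) ^ ((μ:ℤ) - 1)) (j - 1 - i),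
          ← zpow_mul, ← zpow_mul, ← zpow_add₀ (ne_of_gt hq0)]
        congr 1
        have h2 : ((j - 1 - i : ℕ) : ℤ) = (j : ℤ) - 1 - i := by omega
        rw [h2]
        ring
      have hcj : ‖T.coeff j‖ ≤ (p:ℝ) ^ (-((μ:ℤ) * j)) := by
        refine le_trans (hcoeff j) (le_of_eq ?_)
        have hcast : ((μ * j : ℕ) : ℤ) = (μ : ℤ) * j := by push_cast; ring
        rw [inv_pow, ← zpow_natCast (p:ℝ) (μ * j), ← zpow_neg, hcast]
      calc ‖f j‖ = ‖T.coeff j‖ * ‖∑ i ∈ Finset.range j, β ^ i * z ^ (j - 1 - i)‖ := norm_mul _ _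
        _ ≤ (p:ℝ) ^ (-((μ:ℤ) * j)) * (p:ℝ) ^ (((μ:ℤ) - 1) * ((j : ℤ) - 1)) := by
            refine mul_le_mul hcj hinner (norm_nonneg _) (by positivity)
        _ = (p:ℝ) ^ (-((μ:ℤ) * j) + ((μ:ℤ) - 1) * ((j : ℤ) - 1)) := (zpow_add₀ (ne_of_gt hq0) _ _).symm
        _ ≤ (p:ℝ) ^ (-(μ:ℤ) - 1) := by
            rw [zpow_le_zpow_iff_right₀ hq]
            have : (2 : ℤ) ≤ (j : ℤ) := by omega
            nlinarith [this]
        _ = ((p:ℝ)⁻¹) ^ μ * (p:ℝ)⁻¹ := by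
            have h3 : (-(μ:ℤ) - 1) = -(μ:ℤ) + (-1) := by ring
            rw [h3, inv_pow, ← zpow_natCast (p:ℝ) μ, ← zpow_neg, ← zpow_neg_one (p:ℝ),
              ← zpow_add₀ (ne_of_gt hq0)]
  have hf1 : f 1 = T.coeff 1 := by simp [hf]
  have hlt : ‖∑ j ∈ Finset.range (D + 1) \ {1}, f j‖ < ‖f 1‖ := by
    rw [hf1, hc1]
    refine lt_of_le_of_lt (nsum_le (by positivity) hbig) ?_
    calc ((p:ℝ)⁻¹) ^ μ * (p:ℝ)⁻¹ < ((p:ℝ)⁻¹) ^ μ * 1 :=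
        mul_lt_mul_of_pos_left pinv_lt_one (pow_pos pinv_pos μ)
      _ = ((p:ℝ)⁻¹) ^ μ := mul_one _
  have hsum : ‖∑ j ∈ Finset.range (D + 1), f j‖ = ((p:ℝ)⁻¹) ^ μ := by
    rw [Finset.sum_eq_sum_sdiff_singleton_add hmem f, add_comm, ndom hlt, hf1, hc1]
  rw [key, norm_mul, hsum]

end part1

/-! ### Misc final helpers -/

lemma pinv_zpow_eq (n : ℕ) : ((p:ℝ)⁻¹) ^ n = (p:ℝ) ^ (-(n:ℤ)) := by
  rw [inv_pow, ← zpow_natCast, ← zpow_neg]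

lemma norm_sq_le_inv {t : ℚ_[p]} (h : ‖t * t‖ ≤ (p:ℝ)⁻¹) : ‖t‖ ≤ (p:ℝ)⁻¹ := by
  by_cases h0 : t = 0
  · rw [h0, norm_zero]; exact pinv_pos.le
  · have hq : (1:ℝ) < p := by exact_mod_cast (Fact.out : p.Prime).one_lt
    have hq0 : (0:ℝ) < p := lt_trans one_pos hq
    rw [norm_mul, Padic.norm_eq_zpow_neg_valuation h0, ← zpow_add₀ (ne_of_gt hq0)] at h
    rw [← zpow_neg_one (p:ℝ)] at h
    rw [zpow_le_zpow_iff_right₀ hq] at h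
    rw [Padic.norm_eq_zpow_neg_valuation h0, ← zpow_neg_one (p:ℝ), zpow_le_zpow_iff_right₀ hq]
    omega

lemma norm_Sf_le_one {A w : ℚ_[p]} (hA : ‖A‖ = 1) (hw : ‖w‖ ≤ 1) (k : ℕ) : ‖Sf A w k‖ ≤ 1 := by
  refine nsum_le one_pos.le ?_
  intro i hi
  rw [norm_mul, norm_mul, norm_zpow, hA, one_zpow, mul_one, norm_pow]
  calc ‖(k.choose (2 * i + 1) : ℚ_[p])‖ * ‖w‖ ^ i ≤ 1 * 1 :=
      mul_le_mul (natnorm_le_one _) (pow_le_one₀ (norm_nonneg _) hw) (by positivity) one_pos.le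
    _ = 1 := mul_one _

end S15

open S15 Polynomial in
/-- Let `p` be an odd prime, `α ∈ ℤ_p^×`, `μ ≥ 0`, `k ≥ 1` with `o_ᾱ ∣ k`, and let
`z = z^μ(α) ∈ ℚ_p` be the maximal-valuation root of `t_{o_ᾱ} = det(g^{o_ᾱ} - 1)`, of
valuation `2v_α - μ`.  Then for any `β ∈ ℚ_p` with `v(β) > 2/(p-1) - μ` (and `β ≠ z`),
one has `v(t_k(β)) = v(β - z) + 2v(k) + μ`. -/
theorem stmt_15 (p : ℕ) [Fact p.Prime] (hp : p ≠ 2) (α : ℤ_[p]) (hα : IsUnit α) (μ : ℕ)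
    (o : ℕ) (ho : 0 < o)
    (hoa : ∀ m : ℕ, 0 < m → ((p : ℤ_[p]) ∣ α ^ m - 1 ↔ o ∣ m))
    (hα1 : α ^ o ≠ 1)
    (z : ℚ_[p])
    (hz : Polynomial.eval z ((tPoly p α μ o).map (algebraMap ℤ_[p] ℚ_[p])) = 0)
    (hzv : z.valuation = 2 * (α ^ o - 1).valuation - μ)
    (k : ℕ) (hk : 1 ≤ k) (hok : o ∣ k)
    (β : ℚ_[p]) (hβ : ((β.valuation : ℝ)) > 2 / ((p : ℝ) - 1) - μ) (hβz : β ≠ z) :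
    (Polynomial.eval β ((tPoly p α μ k).map (algebraMap ℤ_[p] ℚ_[p]))).valuation =
      (β - z).valuation + 2 * (padicValNat p k : ℤ) + μ := by
  have hpp : p.Prime := Fact.out
  have hq : (1:ℝ) < p := by exact_mod_cast hpp.one_lt
  have hq0 : (0:ℝ) < p := lt_trans one_pos hq
  have hqne : (p:ℝ) ≠ 0 := ne_of_gt hq0
  have hq1 : (p:ℝ) ≠ 1 := ne_of_gt hq
  -- basic facts about α
  have hαn : ‖(α : ℚ_[p])‖ = 1 := by
    rw [PadicInt.padic_norm_e_of_padicInt]; exact PadicInt.isUnit_iff.mp hα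
  have hA : (α : ℚ_[p]) ≠ 0 := by
    intro h; rw [h, norm_zero] at hαn; norm_num at hαn
  have hdvd_o : (p : ℤ_[p]) ∣ α ^ o - 1 := (hoa o ho).mpr dvd_rfl
  -- Fermat: p ∣ α^(p-1) - 1, hence o ∣ p - 1, hence ¬ p ∣ o
  have hfermat : (p : ℤ_[p]) ∣ α ^ (p - 1) - 1 := by
    have hαz : (PadicInt.toZMod α : ZMod p) ≠ 0 := (hα.map PadicInt.toZMod).ne_zero
    have hφ : PadicInt.toZMod (α ^ (p - 1) - 1) = 0 := by
      rw [map_sub, map_pow, map_one, ZMod.pow_card_sub_one_eq_one hαz, sub_self]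
    have hker : α ^ (p - 1) - 1 ∈ RingHom.ker (PadicInt.toZMod (p := p)) := hφ
    rw [PadicInt.ker_toZMod, PadicInt.maximalIdeal_eq_span_p, Ideal.mem_span_singleton] at hker
    exact hker
  have hop : o ∣ p - 1 := (hoa (p - 1) (by have := hpp.two_le; omega)).mp hfermat
  have hpo : ¬ p ∣ o := by
    intro hc
    have h1 : p ≤ o := Nat.le_of_dvd ho hc
    have h2 : o ≤ p - 1 := Nat.le_of_dvd (by have := hpp.two_le; omega) hop
    omega
  -- split k = o * m
  obtain ⟨m, rfl⟩ := hok
  have hm : 1 ≤ m := by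
    rcases Nat.eq_zero_or_pos m with h | h
    · subst h; simp at hk
    · exact h
  -- norm bound on β
  have hvβ : β ≠ 0 → (1 : ℤ) - μ ≤ β.valuation := by
    intro h0
    have h2q : (0:ℝ) < 2 / ((p:ℝ) - 1) := by
      apply div_pos two_pos; linarith
    have : ((β.valuation : ℝ)) > -(μ:ℝ) := by
      calc ((β.valuation : ℝ)) > 2 / ((p:ℝ) - 1) - μ := hβ
        _ ≥ -(μ:ℝ) := by linarith
    have hcast : (-(μ:ℤ) : ℝ) < (β.valuation : ℝ) := by push_cast; linarith
    have h5 : (-(μ:ℤ)) < β.valuation := by exact_mod_cast hcast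
    omega
  have hβ1 : ‖β‖ ≤ (p:ℝ) ^ ((μ:ℤ) - 1) := by
    by_cases h0 : β = 0
    · rw [h0, norm_zero]; positivity
    · rw [Padic.norm_eq_zpow_neg_valuation h0]
      rw [zpow_le_zpow_iff_right₀ hq]
      have := hvβ h0; omega
  have hβ2 : p = 3 → ‖β‖ ≤ (p:ℝ) ^ ((μ:ℤ) - 2) := by
    intro h3
    by_cases h0 : β = 0
    · rw [h0, norm_zero]; positivity
    · rw [Padic.norm_eq_zpow_neg_valuation h0, zpow_le_zpow_iff_right₀ hq]
      have hval : ((1:ℤ)) - μ + 1 ≤ β.valuation := by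
        have : ((β.valuation : ℝ)) > 1 - μ := by
          have : 2 / ((p:ℝ) - 1) = 1 := by subst h3; norm_num
          rw [this] at hβ; exact hβ
        have hcast : ((1 - (μ:ℤ) : ℤ) : ℝ) < (β.valuation : ℝ) := by push_cast; linarith
        have h5 : (1 - (μ:ℤ)) < β.valuation := by exact_mod_cast hcast
        omega
      omega
  -- facts about z
  have hαo0 : α ^ o - 1 ≠ 0 := sub_ne_zero.mpr hα1
  have hz0 : z ≠ 0 := by
    intro h0
    subst h0
    rw [← Polynomial.coeff_zero_eq_eval_zero, coeff_tPoly_zero] at hz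
    have h1 : ((α : ℚ_[p]) ^ o - 1) = 0 := by
      have := sq_eq_zero_iff.mp hz; exact this
    have h2 : (((α ^ o - 1 : ℤ_[p])) : ℚ_[p]) = 0 := by push_cast [h1]; ring
    have h3 : ‖(((α ^ o - 1 : ℤ_[p])) : ℚ_[p])‖ = 0 := by rw [h2, norm_zero]
    rw [PadicInt.padic_norm_e_of_padicInt, norm_eq_zero] at h3
    exact hαo0 h3
  have hvα : 1 ≤ (α ^ o - 1).valuation := by
    have h1 : ‖((α ^ o - 1 : ℤ_[p]) : ℚ_[p])‖ ≤ (p:ℝ)⁻¹ := intnorm_le_of_dvd hdvd_o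
    rw [PadicInt.padic_norm_e_of_padicInt, PadicInt.norm_eq_zpow_neg_valuation hαo0,
      ← zpow_neg_one (p:ℝ), zpow_le_zpow_iff_right₀ hq] at h1
    omega
  have hzb : ‖z‖ ≤ (p:ℝ) ^ ((μ:ℤ) - 2) := by
    rw [Padic.norm_eq_zpow_neg_valuation hz0, hzv, zpow_le_zpow_iff_right₀ hq]
    omega
  have hzb1 : ‖z‖ ≤ (p:ℝ) ^ ((μ:ℤ) - 1) :=
    le_trans hzb (zpow_le_zpow_right₀ hq.le (by omega))
  -- the quadratic data
  set A : ℚ_[p] := (α : ℚ_[p]) with hAdef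
  set w : ℚ_[p] := (p : ℚ_[p]) ^ μ * β with hwdef
  have hw1 : ‖w‖ ≤ (p:ℝ)⁻¹ := by
    rw [hwdef, norm_mul, norm_pow, Padic.norm_p]
    calc ((p:ℝ)⁻¹) ^ μ * ‖β‖ ≤ (p:ℝ) ^ (-(μ:ℤ)) * (p:ℝ) ^ ((μ:ℤ) - 1) := by
          refine mul_le_mul (le_of_eq (pinv_zpow_eq μ)) hβ1 (norm_nonneg _) (by positivity)
      _ = (p:ℝ) ^ (-(μ:ℤ) + ((μ:ℤ) - 1)) := (zpow_add₀ hqne _ _).symm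
      _ = (p:ℝ)⁻¹ := by
          rw [show -(μ:ℤ) + ((μ:ℤ) - 1) = -1 by ring, zpow_neg_one]
  have hwle1 : ‖w‖ ≤ 1 := le_trans hw1 pinv_le_one
  -- part 1 : the norm of δ = t_o(β)
  have hβz' : β - z ≠ 0 := sub_ne_zero.mpr hβz
  have hδnorm : ‖Polynomial.eval β ((tPoly p α μ o).map (algebraMap ℤ_[p] ℚ_[p]))‖ =
      ‖β - z‖ * ((p:ℝ)⁻¹) ^ μ :=
    part1 hz hβ1 hzb1 (norm_coeff_tPoly α μ o) (norm_coeff_tPoly_one α hα μ o hdvd_o hpo)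
  set ρ : ℚ_[p] := Rf A w o with hρdef
  set σ : ℚ_[p] := Sf A w o with hσdef
  have hδeq : Polynomial.eval β ((tPoly p α μ o).map (algebraMap ℤ_[p] ℚ_[p])) =
      (ρ - 1) ^ 2 - w * σ ^ 2 := eval_tPoly_map α μ β o
  have hβzle : ‖β - z‖ ≤ (p:ℝ) ^ ((μ:ℤ) - 1) := nmax_sub_le hβ1 hzb1
  have hδle : ‖(ρ - 1) ^ 2 - w * σ ^ 2‖ ≤ (p:ℝ)⁻¹ := by
    rw [← hδeq, hδnorm]
    calc ‖β - z‖ * ((p:ℝ)⁻¹) ^ μ ≤ (p:ℝ) ^ ((μ:ℤ) - 1) * (p:ℝ) ^ (-(μ:ℤ)) := by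
          refine mul_le_mul hβzle (le_of_eq (pinv_zpow_eq μ)) (by positivity) (by positivity)
      _ = (p:ℝ)⁻¹ := by
          rw [← zpow_add₀ hqne, show (μ:ℤ) - 1 + -(μ:ℤ) = -1 by ring, zpow_neg_one]
  have hδ3 : p = 3 → ‖(ρ - 1) ^ 2 - w * σ ^ 2‖ ≤ ((p:ℝ)⁻¹) ^ 2 := by
    intro h3
    rw [← hδeq, hδnorm]
    have hβz2 : ‖β - z‖ ≤ (p:ℝ) ^ ((μ:ℤ) - 2) := nmax_sub_le (hβ2 h3) hzb
    calc ‖β - z‖ * ((p:ℝ)⁻¹) ^ μ ≤ (p:ℝ) ^ ((μ:ℤ) - 2) * (p:ℝ) ^ (-(μ:ℤ)) := by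
          refine mul_le_mul hβz2 (le_of_eq (pinv_zpow_eq μ)) (by positivity) (by positivity)
      _ = ((p:ℝ)⁻¹) ^ 2 := by
          rw [← zpow_add₀ hqne, pinv_zpow_eq]
          congr 1; ring
  have hσle : ‖σ‖ ≤ 1 := norm_Sf_le_one hαn hwle1 o
  have hxle : ‖ρ - 1‖ ≤ (p:ℝ)⁻¹ := by
    refine norm_sq_le_inv ?_
    have e : (ρ - 1) * (ρ - 1) = ((ρ - 1) ^ 2 - w * σ ^ 2) + w * σ ^ 2 := by ring
    rw [e]
    refine nmax_le hδle ?_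
    rw [norm_mul, norm_pow]
    calc ‖w‖ * ‖σ‖ ^ 2 ≤ (p:ℝ)⁻¹ * 1 :=
        mul_le_mul hw1 (pow_le_one₀ (norm_nonneg _) hσle) (by positivity) pinv_pos.le
      _ = (p:ℝ)⁻¹ := mul_one _
  -- part 2: apply main2 with u = (ρ, σ)
  have hmain := main2 (w := w) (u := (ρ, σ)) hp (by simpa using hδ3) (by simpa using hxle)
    (by simpa using hσle) hw1 m hm
  simp only [Prod.fst, Prod.snd] at hmain
  -- identify eval of t_k with the pair power
  obtain ⟨hR, hS⟩ := RS_ppow w hA o m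
  have hTk : Polynomial.eval β ((tPoly p α μ (o * m)).map (algebraMap ℤ_[p] ℚ_[p])) =
      ((ppow w (ρ, σ) m).1 - 1) ^ 2 - w * (ppow w (ρ, σ) m).2 ^ 2 := by
    rw [eval_tPoly_map α μ β (o * m), ← hwdef, ← hAdef, hR, hS]
  have hfinal : ‖Polynomial.eval β ((tPoly p α μ (o * m)).map (algebraMap ℤ_[p] ℚ_[p]))‖ =
      ‖β - z‖ * ((p:ℝ)⁻¹) ^ μ * ((p:ℝ)⁻¹) ^ (2 * padicValNat p m) := by
    rw [hTk, hmain]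
    have : ‖((ρ, σ).1 - 1) ^ 2 - w * (ρ, σ).2 ^ 2‖ = ‖β - z‖ * ((p:ℝ)⁻¹) ^ μ := by
      simp only [Prod.fst, Prod.snd]
      rw [← hδeq, hδnorm]
    rw [this]
  -- nonvanishing
  have hne : Polynomial.eval β ((tPoly p α μ (o * m)).map (algebraMap ℤ_[p] ℚ_[p])) ≠ 0 := by
    intro h
    rw [h, norm_zero] at hfinal
    have h1 : 0 < ‖β - z‖ := norm_pos_iff.mpr hβz'
    have h2 : (0:ℝ) < ((p:ℝ)⁻¹) ^ μ := pow_pos pinv_pos μ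
    have h3 : (0:ℝ) < ((p:ℝ)⁻¹) ^ (2 * padicValNat p m) := pow_pos pinv_pos _
    have := mul_pos (mul_pos h1 h2) h3
    linarith
  -- convert norms to valuations
  have hvk : (padicValNat p (o * m) : ℤ) = (padicValNat p m : ℤ) := by
    rw [padicValNat.mul (by omega) (by omega), padicValNat.eq_zero_of_not_dvd hpo]
    norm_num
  rw [Padic.norm_eq_zpow_neg_valuation hne, Padic.norm_eq_zpow_neg_valuation hβz', pinv_zpow_eq, pinv_zpow_eq,
    ← zpow_add₀ hqne, ← zpow_add₀ hqne] at hfinal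
  have hinj := zpow_right_injective₀ hq0 hq1 hfinal
  rw [hvk]
  push_cast at hinj ⊢
  linarith [hinj]
end

section
/- Let p be an odd prime, n ≥ 1, α ∈ (ℤ/p^n)^×, and let D ⊆ GL₂(ℤ/p^n) be the group of matrices with rows (α^k a, b) and (0, α^{-k}) for 0 ≤ k < o_α, a ∈ (ℤ/p^n)^×, b ∈ ℤ/p^n, where o_α is the order of α. For w = (x,y)ᵗ with x, y ∈ ℤ/p^n and at least one a unit: if v(y) = 0 the stabilizer of w in D has order (p-1)p^{n-1}; if v(x) = 0 and 0 < v(y) < n it has order p^{min{n+v(y), 2n-v_α}}; and if v(x)=0 and y = 0 it has order o_ᾱ p^{2n-v_α}. -/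
section StabHelpers

variable {p n : ℕ} [Fact p.Prime]

private lemma mulvec2 {R : Type*} [CommRing R] (A B C x y : R) :
    (!![A, B; 0, C]).mulVec ![x, y] = ![x, y] ↔ (A * x + B * y = x ∧ C * y = y) := by
  rw [funext_iff, Fin.forall_fin_two]
  simp [Matrix.mulVec, dotProduct, Fin.sum_univ_two, mul_comm]

private lemma unitsMap_pow_eq_one_iff (α : (ZMod (p ^ n))ˣ) {M : ℕ} [NeZero M]
    (hdM : M ∣ p ^ n) (N : ℕ) :
    (ZMod.unitsMap hdM α) ^ N = 1 ↔ (M : ℤ) ∣ ((α : ZMod (p ^ n)).val : ℤ) ^ N - 1 := by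
  rw [Units.ext_iff, Units.val_pow_eq_pow_val]
  rw [ZMod.unitsMap_def]
  rw [Units.coe_map, MonoidHom.coe_coe, ZMod.castHom_apply]
  have h1 : (ZMod.cast ((α : ZMod (p ^ n))) : ZMod M)
      = (((α : ZMod (p ^ n)).val : ℤ) : ZMod M) := by
    rw [← ZMod.natCast_val]
    push_cast
    rfl
  rw [h1, Units.val_one, ← sub_eq_zero]
  rw [show ((((α : ZMod (p ^ n)).val : ℤ) : ZMod M) ^ N - 1 : ZMod M)
      = ((((α : ZMod (p ^ n)).val : ℤ) ^ N - 1 : ℤ) : ZMod M) by push_cast; ring]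
  rw [ZMod.intCast_zmod_eq_zero_iff_dvd]

private lemma lte_emult (hp2 : p ≠ 2) {g : ℤ} (hg : ¬ (p : ℤ) ∣ g) {N : ℕ}
    (hbase : (p : ℤ) ∣ g ^ N - 1) (t : ℕ) :
    emultiplicity (p : ℤ) (g ^ (N * p ^ t) - 1) =
      emultiplicity (p : ℤ) (g ^ N - 1) + t := by
  have hp : p.Prime := Fact.out
  have hodd : Odd p := hp.odd_of_ne_two hp2
  have hgN : ¬ (p : ℤ) ∣ g ^ N := fun h => hg ((Nat.prime_iff_prime_int.mp hp).dvd_of_dvd_pow h)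
  have := Int.emultiplicity_pow_sub_pow hp hodd (x := g ^ N) (y := 1)
    (by simpa using hbase) hgN (p ^ t)
  rw [one_pow, ← pow_mul] at this
  rw [this, emultiplicity_pow_self_of_prime hp.prime t]

private lemma dvd_val_iff' (hn : 1 ≤ n) (z : ZMod (p ^ n)) :
    (p : ZMod (p ^ n)) ∣ z ↔ p ∣ z.val := by
  haveI : NeZero (p ^ n) := ⟨pow_ne_zero _ (Fact.out : p.Prime).ne_zero⟩
  constructor
  · rintro ⟨c, rfl⟩
    have : ((p * c.val : ℕ) : ZMod (p ^ n)) = (p : ZMod (p ^ n)) * c := by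
      push_cast [ZMod.natCast_zmod_val]; ring
    rw [← this, ZMod.val_natCast]
    exact (Nat.dvd_mod_iff (dvd_pow_self p (by omega))).mpr ⟨c.val, rfl⟩
  · rintro ⟨c, hc⟩
    refine ⟨(c : ZMod (p ^ n)), ?_⟩
    rw [← ZMod.natCast_zmod_val z, hc]
    push_cast; ring

private lemma isUnit_iff_not_dvd' (hn : 1 ≤ n) (z : ZMod (p ^ n)) :
    IsUnit z ↔ ¬ (p : ZMod (p ^ n)) ∣ z := by
  haveI : NeZero (p ^ n) := ⟨pow_ne_zero _ (Fact.out : p.Prime).ne_zero⟩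
  rw [dvd_val_iff' hn, ← ZMod.natCast_zmod_val z, ZMod.isUnit_iff_coprime,
    Nat.coprime_pow_right_iff (by omega), Nat.coprime_comm,
    (Fact.out : p.Prime).coprime_iff_not_dvd, ZMod.val_natCast]
  simp [Nat.dvd_mod_iff (dvd_pow_self p (show n ≠ 0 by omega))]

private lemma mul_eq_zero_iff_cast (hn : 1 ≤ n) {w : ℕ} (hwn : w < n) {y : ZMod (p ^ n)}
    (hy : (p : ZMod (p ^ n)) ^ w ∣ y) (hy2 : ¬ (p : ZMod (p ^ n)) ^ (w + 1) ∣ y)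
    (hd : p ^ (n - w) ∣ p ^ n) (z : ZMod (p ^ n)) :
    z * y = 0 ↔ ZMod.castHom hd (ZMod (p ^ (n - w))) z = 0 := by
  have hp : p.Prime := Fact.out
  haveI : NeZero (p ^ n) := ⟨pow_ne_zero _ hp.ne_zero⟩
  haveI : NeZero (p ^ (n - w)) := ⟨pow_ne_zero _ hp.ne_zero⟩
  obtain ⟨u, hu⟩ := hy
  have huu : IsUnit u := by
    by_contra h
    rw [isUnit_iff_not_dvd' hn] at h
    push_neg at h
    obtain ⟨r, hr⟩ := h
    exact hy2 ⟨r, by rw [hu, hr]; ring⟩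
  have step1 : z * y = 0 ↔ z * (p : ZMod (p ^ n)) ^ w = 0 := by
    rw [hu, mul_comm ((p : ZMod (p ^ n)) ^ w) u, ← mul_assoc, mul_comm z u, mul_assoc,
      (huu.mul_right_eq_zero)]
  have step2 : z * (p : ZMod (p ^ n)) ^ w = 0 ↔ p ^ (n - w) ∣ z.val := by
    have hcast : z * (p : ZMod (p ^ n)) ^ w = ((z.val * p ^ w : ℕ) : ZMod (p ^ n)) := by
      push_cast [ZMod.natCast_zmod_val]
      ring
    rw [hcast, ZMod.natCast_eq_zero_iff]
    generalize ZMod.val z = a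
    rw [show p ^ n = p ^ (n - w) * p ^ w by rw [← pow_add]; congr 1; omega,
      Nat.mul_dvd_mul_iff_right (pow_pos hp.pos w)]
  have step3 : ZMod.castHom hd (ZMod (p ^ (n - w))) z = 0 ↔ p ^ (n - w) ∣ z.val := by
    rw [ZMod.castHom_apply,
      show (ZMod.cast z : ZMod (p ^ (n - w))) = ((z.val : ℕ) : ZMod (p ^ (n - w))) from by
        rw [← ZMod.natCast_val],
      ZMod.natCast_eq_zero_iff]
  rw [step1, step2, step3]

private lemma order_unitsMap (hp2 : p ≠ 2) (hn : 1 ≤ n) (α : (ZMod (p ^ n))ˣ)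
    (oab vα : ℕ) (hoab : ¬ p ∣ oab) (hvα : vα ≤ n)
    (hfact : orderOf α = oab * p ^ (n - vα))
    {w : ℕ} (hw1 : 1 ≤ w) (hwn : w < n) (hd : p ^ (n - w) ∣ p ^ n) :
    orderOf (ZMod.unitsMap hd α) = oab * p ^ (n - vα - min w (n - vα)) := by

  have hp : p.Prime := Fact.out
  haveI : NeZero (p ^ n) := ⟨pow_ne_zero _ hp.ne_zero⟩
  haveI : NeZero (p ^ (n - w)) := ⟨pow_ne_zero _ hp.ne_zero⟩
  haveI : NeZero p := ⟨hp.ne_zero⟩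
  set g : ℤ := ((α : ZMod (p ^ n)).val : ℤ) with hg_def
  -- p does not divide g
  have hg : ¬ (p : ℤ) ∣ g := by
    have h1 : IsUnit ((α : ZMod (p ^ n))) := α.isUnit
    rw [isUnit_iff_not_dvd' hn, dvd_val_iff' hn] at h1
    exact fun h => h1 (Int.natCast_dvd_natCast.mp h)
  -- translation at the top level
  have hT_top : ∀ N : ℕ, α ^ N = 1 ↔ (p : ℤ) ^ n ∣ g ^ N - 1 := by
    intro N
    have h := unitsMap_pow_eq_one_iff α (dvd_refl (p ^ n)) N
    rw [ZMod.unitsMap_self, Nat.cast_pow] at h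
    exact h
  have hT : ∀ N : ℕ, (ZMod.unitsMap hd α) ^ N = 1 ↔ (p : ℤ) ^ (n - w) ∣ g ^ N - 1 := by
    intro N
    have h := unitsMap_pow_eq_one_iff α hd N
    rw [Nat.cast_pow] at h
    exact h
  have hple : 2 ≤ p := hp.two_le
  have hOpos : 0 < orderOf α := orderOf_pos α
  have hoab0 : 0 < oab := by
    rcases Nat.eq_zero_or_pos oab with h | h
    · have hf := hfact; rw [h, zero_mul] at hf; omega
    · exact h
  -- order mod p
  set m₁ : ℕ := orderOf (ZMod.unitsMap (dvd_pow_self p (show n ≠ 0 by omega)) α) with hm₁_def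
  have hm₁O : m₁ ∣ orderOf α := orderOf_map_dvd _ _
  have hm₁card : m₁ ∣ p - 1 := by
    have := orderOf_dvd_card (x := ZMod.unitsMap (dvd_pow_self p (show n ≠ 0 by omega)) α)
    rwa [ZMod.card_units] at this
  have hpm₁ : ¬ p ∣ m₁ := by
    intro h
    have : p ∣ p - 1 := h.trans hm₁card
    have := Nat.le_of_dvd (by omega) this
    omega
  have hm₁oab : m₁ ∣ oab := by
    have hcop : Nat.Coprime m₁ (p ^ (n - vα)) :=
      Nat.Coprime.pow_right _ ((hp.coprime_iff_not_dvd.mpr hpm₁).symm)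
    exact hcop.dvd_of_dvd_mul_right (hfact ▸ hm₁O)
  have hbase1 : (p : ℤ) ∣ g ^ m₁ - 1 := by
    have h := (unitsMap_pow_eq_one_iff α (dvd_pow_self p (show n ≠ 0 by omega)) m₁).mp
      (pow_orderOf_eq_one _)
    exact h
  have hbase : (p : ℤ) ∣ g ^ oab - 1 := by
    obtain ⟨t, ht⟩ := hm₁oab
    have h2 := sub_dvd_pow_sub_pow (g ^ m₁) 1 t
    rw [one_pow, ← pow_mul, ← ht] at h2
    exact hbase1.trans h2
  set c : ℕ∞ := emultiplicity (p : ℤ) (g ^ oab - 1) with hc_def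
  -- vα ≤ c
  have hvαc : (vα : ℕ∞) ≤ c := by
    have hO1 : α ^ (oab * p ^ (n - vα)) = 1 := hfact ▸ pow_orderOf_eq_one α
    have h1 : ((n : ℕ) : ℕ∞) ≤ c + (n - vα : ℕ) := by
      rw [← lte_emult hp2 hg hbase (n - vα)]
      exact le_emultiplicity_of_pow_dvd ((hT_top _).mp hO1)
    rcases eq_top_or_lt_top c with h | h
    · rw [h]; exact le_top
    · lift c to ℕ using h.ne with c' hc'
      have h2 : n ≤ c' + (n - vα) := by exact_mod_cast h1
      exact Nat.cast_le.mpr (by omega)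
  set s : ℕ := n - vα - min w (n - vα) with hs_def
  set m : ℕ := orderOf (ZMod.unitsMap hd α) with hm_def
  have hdir1 : m ∣ oab * p ^ s := by
    apply orderOf_dvd_of_pow_eq_one
    rw [hT]
    apply pow_dvd_of_le_emultiplicity
    rw [lte_emult hp2 hg hbase s, ← hc_def]
    calc ((n - w : ℕ) : ℕ∞) ≤ ((vα + s : ℕ) : ℕ∞) := Nat.cast_le.mpr (by omega)
      _ = (vα : ℕ∞) + (s : ℕ∞) := by push_cast; rfl
      _ ≤ c + s := add_le_add_left hvαc _
  have hmO : m ∣ orderOf α := orderOf_map_dvd _ _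
  have hoabm : oab ∣ m := by
    have h1 : (p : ℤ) ^ (n - w) ∣ g ^ m - 1 := (hT m).mp (pow_orderOf_eq_one _)
    have h2 : (p : ℤ) ∣ g ^ m - 1 :=
      dvd_trans (dvd_pow_self _ (show n - w ≠ 0 by omega)) h1
    have h3 : (1 : ℕ∞) ≤ emultiplicity (p : ℤ) (g ^ m - 1) := by
      apply le_emultiplicity_of_pow_dvd
      simpa using h2
    have h4 : α ^ (m * p ^ (n - 1)) = 1 := by
      rw [hT_top]
      apply pow_dvd_of_le_emultiplicity
      rw [lte_emult hp2 hg h2 (n - 1)]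
      calc ((n : ℕ) : ℕ∞) = ((1 + (n - 1) : ℕ) : ℕ∞) := by congr 1; omega
        _ = 1 + ((n - 1 : ℕ) : ℕ∞) := by push_cast; rfl
        _ ≤ _ := add_le_add_left h3 _
    have h5 : oab * p ^ (n - vα) ∣ m * p ^ (n - 1) :=
      hfact ▸ orderOf_dvd_of_pow_eq_one h4
    have h6 : oab ∣ m * p ^ (n - 1) := (Dvd.intro _ rfl).trans h5
    exact (Nat.Coprime.pow_right _
      ((hp.coprime_iff_not_dvd.mpr hoab).symm)).dvd_of_dvd_mul_right h6
  obtain ⟨q, hq⟩ := hoabm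
  have hqdvd : q ∣ p ^ (n - vα) := by
    have h7 := hmO
    rw [hfact, hq] at h7
    exact (Nat.mul_dvd_mul_iff_left hoab0).mp h7
  obtain ⟨e, he, hqe⟩ := (Nat.dvd_prime_pow hp).mp hqdvd
  have hse : p ^ s ∣ p ^ e := by
    rcases Nat.eq_zero_or_pos s with h0 | h0
    · rw [h0, pow_zero]
      exact one_dvd _
    · have hwlt : w < n - vα := by omega
      have hne : α ^ (oab * p ^ (n - vα - 1)) ≠ 1 := by
        intro hcon
        have h5 := hfact ▸ orderOf_dvd_of_pow_eq_one hcon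
        have h6 : p ^ (n - vα) ∣ p ^ (n - vα - 1) := (Nat.mul_dvd_mul_iff_left hoab0).mp h5
        have h8 := (Nat.pow_dvd_pow_iff_le_right hp.one_lt).mp h6
        omega
      have hnotdvd : ¬ ((n : ℕ∞) ≤ c + ((n - vα - 1 : ℕ) : ℕ∞)) := by
        intro hcon
        apply hne
        rw [hT_top]
        apply pow_dvd_of_le_emultiplicity
        rw [lte_emult hp2 hg hbase (n - vα - 1), ← hc_def]
        exact hcon
      rcases eq_top_or_lt_top c with htop | hlt
      · exact absurd (htop ▸ le_top) hnotdvd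
      · lift c to ℕ using hlt.ne with c' hc'
        have hcvα : c' ≤ vα := by
          have h9 : ¬ (n ≤ c' + (n - vα - 1)) := fun hcon =>
            hnotdvd (by exact_mod_cast Nat.cast_le.mpr hcon)
          omega
        have h1 : ((n - w : ℕ) : ℕ∞) ≤ (c' : ℕ∞) + (e : ℕ∞) := by
          have h2 := (hT m).mp (pow_orderOf_eq_one _)
          have h3 := le_emultiplicity_of_pow_dvd h2
          rw [hq, hqe, lte_emult hp2 hg hbase e, ← hc_def] at h3
          exact h3
        have h4 : n - w ≤ c' + e := by exact_mod_cast h1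
        exact pow_dvd_pow p (by omega)
  have hdir2 : oab * p ^ s ∣ m := by
    rw [hq, hqe]
    exact mul_dvd_mul_left _ hse
  exact Nat.dvd_antisymm hdir1 hdir2



private lemma card_multiples (N m' : ℕ) (hm : m' ∣ N) (h0 : 0 < m') :
    Nat.card {k : Fin N // m' ∣ (k : ℕ)} = N / m' := by
  have e : {k : Fin N // m' ∣ (k : ℕ)} ≃ Fin (N / m') := by
    refine ⟨fun k => ⟨(k : ℕ) / m', Nat.div_lt_div_of_lt_of_dvd hm k.1.2⟩,
      fun j => ⟨⟨m' * j, ?_⟩, dvd_mul_right _ _⟩, ?_, ?_⟩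
    · exact (Nat.lt_div_iff_mul_lt' hm _).mp j.2
    · rintro ⟨k, hk⟩
      apply Subtype.ext
      apply Fin.ext
      exact Nat.mul_div_cancel' hk
    · intro j
      apply Fin.ext
      exact Nat.mul_div_cancel_left _ h0
  rw [Nat.card_congr e, Nat.card_eq_fintype_card, Fintype.card_fin]

end StabHelpers

/-- The set of parameters `(k, a, b)` with `0 ≤ k < o_α`, `a ∈ (ℤ/p^n)^×`, `b ∈ ℤ/p^n`
whose associated matrix `!![α^k a, b; 0, α^{-k}]` fixes the vector `(x,y)ᵗ`. -/
def stab17 (p n : ℕ) (α : (ZMod (p ^ n))ˣ) (x y : ZMod (p ^ n)) : Type :=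
  {t : Fin (orderOf α) × (ZMod (p ^ n))ˣ × ZMod (p ^ n) //
    (!![((α ^ (t.1 : ℕ) * t.2.1 : (ZMod (p ^ n))ˣ) : ZMod (p ^ n)), t.2.2;
        0, ((α⁻¹ ^ (t.1 : ℕ) : (ZMod (p ^ n))ˣ) : ZMod (p ^ n))]).mulVec ![x, y] = ![x, y]}

section StabCards

variable {p n : ℕ} [Fact p.Prime]

private lemma stab_mem_iff (α : (ZMod (p ^ n))ˣ) (x y : ZMod (p ^ n))
    (t : Fin (orderOf α) × (ZMod (p ^ n))ˣ × ZMod (p ^ n)) :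
    ((!![((α ^ (t.1 : ℕ) * t.2.1 : (ZMod (p ^ n))ˣ) : ZMod (p ^ n)), t.2.2;
        0, ((α⁻¹ ^ (t.1 : ℕ) : (ZMod (p ^ n))ˣ) : ZMod (p ^ n))]).mulVec ![x, y] = ![x, y]) ↔
    (((α ^ (t.1 : ℕ) * t.2.1 : (ZMod (p ^ n))ˣ) : ZMod (p ^ n)) * x + t.2.2 * y = x ∧
      ((α⁻¹ ^ (t.1 : ℕ) : (ZMod (p ^ n))ˣ) : ZMod (p ^ n)) * y = y) := mulvec2 _ _ _ _ _

private lemma card_stab_unit_y [NeZero (p ^ n)] (α : (ZMod (p ^ n))ˣ)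
    (x y : ZMod (p ^ n)) (hy : IsUnit y) :
    Nat.card (stab17 p n α x y) = Nat.card (ZMod (p ^ n))ˣ := by
  obtain ⟨yu, rfl⟩ := hy
  have hOpos : 0 < orderOf α := orderOf_pos α
  apply Nat.card_congr
  refine Equiv.ofBijective (fun t => t.1.2.1) ⟨?_, ?_⟩
  · rintro ⟨⟨k, a, b⟩, h⟩ ⟨⟨k', a', b'⟩, h'⟩ (hab : a = a')
    rw [stab_mem_iff] at h h'
    have hk0 : ∀ (k : Fin (orderOf α)),
        ((α⁻¹ ^ (k : ℕ) : (ZMod (p ^ n))ˣ) : ZMod (p ^ n)) * (yu : ZMod (p ^ n)) = yu →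
          k = ⟨0, hOpos⟩ := by
      intro k hk
      have h2 := congrArg (fun z => z * ((yu⁻¹ : (ZMod (p ^ n))ˣ) : ZMod (p ^ n))) hk
      simp only [mul_assoc] at h2
      rw [show ((yu : ZMod (p ^ n)) * ((yu⁻¹ : (ZMod (p ^ n))ˣ) : ZMod (p ^ n)) = 1) from
        yu.mul_inv, mul_one] at h2
      have h3 : α ^ (k : ℕ) = 1 := by
        have h21 : α⁻¹ ^ (k : ℕ) = 1 := Units.ext h2
        rw [inv_pow] at h21
        exact inv_eq_one.mp h21
      have h4 := orderOf_dvd_of_pow_eq_one h3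
      have h5 : (k : ℕ) = 0 := by
        rcases Nat.eq_zero_or_pos (k : ℕ) with h | h
        · exact h
        · exact absurd (Nat.le_of_dvd h h4) (by omega)
      exact Fin.ext h5
    have hk := hk0 k h.2
    have hk' := hk0 k' h'.2
    subst hab hk hk'
    have hb : b = b' := by
      have h1 : b * (yu : ZMod (p ^ n)) = b' * yu := add_left_cancel (h.1.trans h'.1.symm)
      have h2 : b * (yu : ZMod (p ^ n)) * ((yu⁻¹ : (ZMod (p ^ n))ˣ) : ZMod (p ^ n))
          = b' * yu * yu⁻¹ := by rw [h1]
      rwa [mul_assoc, mul_assoc,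
        show ((yu : ZMod (p ^ n)) * ((yu⁻¹ : (ZMod (p ^ n))ˣ) : ZMod (p ^ n)) = 1) from
          yu.mul_inv, mul_one, mul_one] at h2
    subst hb
    exact Subtype.ext rfl
  · intro a
    refine ⟨⟨(⟨0, hOpos⟩, a, (x - ↑a * x) * ↑yu⁻¹), ?_⟩, rfl⟩
    rw [stab_mem_iff]
    constructor
    · show ((α ^ ((⟨0, hOpos⟩ : Fin (orderOf α)) : ℕ) * a : (ZMod (p ^ n))ˣ) : ZMod (p ^ n)) * x +
          ((x - ↑a * x) * ↑yu⁻¹) * (yu : ZMod (p ^ n)) = x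
      have e0 : α ^ ((⟨0, hOpos⟩ : Fin (orderOf α)) : ℕ) * a = a := by
        show α ^ (0 : ℕ) * a = a
        rw [pow_zero, one_mul]
      rw [e0, mul_assoc,
        show (((yu⁻¹ : (ZMod (p ^ n))ˣ) : ZMod (p ^ n)) * (yu : ZMod (p ^ n)) = 1) from
          yu.inv_mul, mul_one]
      ring
    · show ((α⁻¹ ^ ((⟨0, hOpos⟩ : Fin (orderOf α)) : ℕ) : (ZMod (p ^ n))ˣ) : ZMod (p ^ n))
          * (yu : ZMod (p ^ n)) = yu
      have e1 : α⁻¹ ^ ((⟨0, hOpos⟩ : Fin (orderOf α)) : ℕ) = 1 := by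
        show α⁻¹ ^ (0 : ℕ) = 1
        rw [pow_zero]
      rw [e1, Units.val_one, one_mul]

private lemma card_stab_unit_x [NeZero (p ^ n)] (α : (ZMod (p ^ n))ˣ)
    (x y : ZMod (p ^ n)) (hx : IsUnit x) (hy : (p : ZMod (p ^ n)) ∣ y) :
    Nat.card (stab17 p n α x y) =
      Nat.card {k : Fin (orderOf α) // ((α : ZMod (p ^ n)) ^ (k : ℕ) - 1) * y = 0} * p ^ n := by
  obtain ⟨xu, rfl⟩ := hx
  obtain ⟨r, hr⟩ := hy
  have hxx : ((xu⁻¹ : (ZMod (p ^ n))ˣ) : ZMod (p ^ n)) * (xu : ZMod (p ^ n)) = 1 := xu.inv_mul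
  have hxx2 : (xu : ZMod (p ^ n)) * ((xu⁻¹ : (ZMod (p ^ n))ˣ) : ZMod (p ^ n)) = 1 := xu.mul_inv
  have hnil : ∀ c : ZMod (p ^ n), IsNilpotent ((p : ZMod (p ^ n)) * c) := fun c =>
    ⟨n, by rw [mul_pow, ← Nat.cast_pow, ZMod.natCast_self, zero_mul]⟩
  have hu : ∀ b : ZMod (p ^ n), IsUnit ((xu : ZMod (p ^ n)) - b * y) := by
    intro b
    have h1 := (hnil (↑xu⁻¹ * r * b)).isUnit_one_sub
    have h2 : (xu : ZMod (p ^ n)) - b * y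
        = ↑xu * (1 - (p : ZMod (p ^ n)) * (↑xu⁻¹ * r * b)) := by
      rw [hr]
      linear_combination ((p : ZMod (p ^ n)) * r * b) * hxx2
    rw [h2]
    exact xu.isUnit.mul h1
  have key : ∀ (k : Fin (orderOf α)),
      (((α⁻¹ ^ (k : ℕ) : (ZMod (p ^ n))ˣ) : ZMod (p ^ n)) * y = y) ↔
        ((α : ZMod (p ^ n)) ^ (k : ℕ) - 1) * y = 0 := by
    intro k
    have hval : ((α ^ (k : ℕ) : (ZMod (p ^ n))ˣ) : ZMod (p ^ n))
        = (α : ZMod (p ^ n)) ^ (k : ℕ) := Units.val_pow_eq_pow_val α (k : ℕ)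
    have hprod : ((α⁻¹ ^ (k : ℕ) : (ZMod (p ^ n))ˣ) : ZMod (p ^ n)) *
        ((α ^ (k : ℕ) : (ZMod (p ^ n))ˣ) : ZMod (p ^ n)) = 1 := by
      rw [← Units.val_mul, inv_pow, inv_mul_cancel, Units.val_one]
    have hprod2 : ((α ^ (k : ℕ) : (ZMod (p ^ n))ˣ) : ZMod (p ^ n)) *
        ((α⁻¹ ^ (k : ℕ) : (ZMod (p ^ n))ˣ) : ZMod (p ^ n)) = 1 := by
      rw [← Units.val_mul, inv_pow, mul_inv_cancel, Units.val_one]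
    constructor
    · intro h
      rw [sub_mul, one_mul, sub_eq_zero, ← hval]
      have h2 := congrArg
        (fun z => ((α ^ (k : ℕ) : (ZMod (p ^ n))ˣ) : ZMod (p ^ n)) * z) h
      simp only [← mul_assoc] at h2
      rw [hprod2, one_mul] at h2
      exact h2.symm
    · intro h
      rw [sub_mul, one_mul, sub_eq_zero, ← hval] at h
      have h2 := congrArg
        (fun z => ((α⁻¹ ^ (k : ℕ) : (ZMod (p ^ n))ˣ) : ZMod (p ^ n)) * z) h
      simp only [← mul_assoc] at h2
      rw [hprod, one_mul] at h2
      exact h2.symm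
  have e : stab17 p n α (↑xu) y ≃
      ({k : Fin (orderOf α) // ((α : ZMod (p ^ n)) ^ (k : ℕ) - 1) * y = 0} × ZMod (p ^ n)) := by
    refine Equiv.ofBijective
      (fun t => (⟨t.1.1, (key t.1.1).mp ((stab_mem_iff α _ y t.1).mp t.2).2⟩, t.1.2.2)) ⟨?_, ?_⟩
    · rintro ⟨⟨k, a, b⟩, h⟩ ⟨⟨k', a', b'⟩, h'⟩ heq
      rw [Prod.mk.injEq, Subtype.mk.injEq] at heq
      obtain ⟨hk, hb⟩ := heq
      rw [stab_mem_iff] at h h'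
      subst hk hb
      have h1 : ((α ^ (k : ℕ) * a : (ZMod (p ^ n))ˣ) : ZMod (p ^ n)) * (xu : ZMod (p ^ n))
          = ((α ^ (k : ℕ) * a' : (ZMod (p ^ n))ˣ) : ZMod (p ^ n)) * xu :=
        add_right_cancel (h.1.trans h'.1.symm)
      have h2 : (α ^ (k : ℕ) * a) = (α ^ (k : ℕ) * a') := by
        apply Units.ext
        have h3 := congrArg
          (fun z => z * ((xu⁻¹ : (ZMod (p ^ n))ˣ) : ZMod (p ^ n))) h1
        simp only [mul_assoc] at h3
        rw [hxx2, mul_one, mul_one] at h3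
        exact h3
      have ha : a = a' := mul_left_cancel h2
      subst ha
      exact Subtype.ext rfl
    · rintro ⟨⟨k, hkmem⟩, b⟩
      refine ⟨⟨(k, (α ^ (k : ℕ))⁻¹ * (hu b).unit * xu⁻¹, b), ?_⟩, ?_⟩
      · rw [stab_mem_iff]
        refine ⟨?_, (key k).mpr hkmem⟩
        have hUspec : ((hu b).unit : ZMod (p ^ n)) = (xu : ZMod (p ^ n)) - b * y :=
          (hu b).unit_spec
        have hgrp : α ^ (k : ℕ) * ((α ^ (k : ℕ))⁻¹ * (hu b).unit * xu⁻¹)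
            = (hu b).unit * xu⁻¹ := by
          rw [← mul_assoc, ← mul_assoc, mul_inv_cancel, one_mul]
        show ((α ^ (k : ℕ) * ((α ^ (k : ℕ))⁻¹ * (hu b).unit * xu⁻¹) : (ZMod (p ^ n))ˣ) :
            ZMod (p ^ n)) * (xu : ZMod (p ^ n)) + b * y = xu
        rw [hgrp, Units.val_mul, mul_assoc, hxx, mul_one, hUspec]
        ring
      · rfl
  rw [Nat.card_congr e, Nat.card_prod, Nat.card_zmod]

end StabCards

/-- Let `p` be an odd prime, `n ≥ 1`, `α ∈ (ℤ/p^n)^×`, and let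
`D = {!![α^k a, b; 0, α^{-k}] : 0 ≤ k < o_α, a ∈ (ℤ/p^n)^×, b ∈ ℤ/p^n}` act on column
vectors.  Write `o_α = o_ᾱ p^{n-v_α}` with `p ∤ o_ᾱ`, and let `v` be the truncated
`p`-adic valuation on `ℤ/p^n` (so `v(0) = n`).  For `w = (x,y)ᵗ` with `x` or `y` a unit:
if `v(y) = 0` the stabilizer of `w` in `D` has order `(p-1)p^{n-1}`; if `v(x) = 0` and
`0 < v(y) < n` it has order `p^{min(n+v(y), 2n-v_α)}`; and if `v(x) = 0` and `y = 0` it has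
order `o_ᾱ p^{2n-v_α}`. -/
theorem stmt_17 (p n : ℕ) [Fact p.Prime] (hp : p ≠ 2) (hn : 1 ≤ n)
    (α : (ZMod (p ^ n))ˣ)
    (v : ZMod (p ^ n) → ℕ)
    (hv : ∀ (y : ZMod (p ^ n)) (t : ℕ), ((p : ZMod (p ^ n)) ^ t ∣ y ∧ t ≤ n) ↔ t ≤ v y)
    (oab vα : ℕ) (hoab : ¬ p ∣ oab) (hvα : vα ≤ n)
    (hfact : orderOf α = oab * p ^ (n - vα))
    (x y : ZMod (p ^ n)) (hw : IsUnit x ∨ IsUnit y) :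
    (v y = 0 → Nat.card (stab17 p n α x y) = (p - 1) * p ^ (n - 1)) ∧
    (v x = 0 → 0 < v y → v y < n →
        Nat.card (stab17 p n α x y) = p ^ min (n + v y) (2 * n - vα)) ∧
    (v x = 0 → y = 0 → Nat.card (stab17 p n α x y) = oab * p ^ (2 * n - vα)) := by
  classical
  have hpp : p.Prime := Fact.out
  haveI : NeZero (p ^ n) := ⟨pow_ne_zero _ hpp.ne_zero⟩
  refine ⟨?_, ?_, ?_⟩
  · -- v y = 0 : y is a unit
    intro hvy
    have hyu : IsUnit y := by
      rw [isUnit_iff_not_dvd' hn]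
      intro hdvd
      have h1 := (hv y 1).mp ⟨by simpa using hdvd, hn⟩
      omega
    rw [card_stab_unit_y α x y hyu, Nat.card_eq_fintype_card, ZMod.card_units_eq_totient,
      Nat.totient_prime_pow hpp (by omega), mul_comm]
  · -- v x = 0, 0 < v y < n
    intro hvx hvy1 hvy2
    have hxu : IsUnit x := by
      rw [isUnit_iff_not_dvd' hn]
      intro hdvd
      have h1 := (hv x 1).mp ⟨by simpa using hdvd, hn⟩
      omega
    set w : ℕ := v y with hw_def
    have hyw : (p : ZMod (p ^ n)) ^ w ∣ y := ((hv y w).mpr le_rfl).1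
    have hyw2 : ¬ (p : ZMod (p ^ n)) ^ (w + 1) ∣ y := by
      intro hdvd
      have h1 := (hv y (w + 1)).mp ⟨hdvd, by omega⟩
      omega
    have hyp : (p : ZMod (p ^ n)) ∣ y := by
      have h1 := ((hv y 1).mpr (by omega)).1
      simpa using h1
    have hd : p ^ (n - w) ∣ p ^ n := pow_dvd_pow p (by omega)
    haveI : NeZero (p ^ (n - w)) := ⟨pow_ne_zero _ hpp.ne_zero⟩
    set m : ℕ := orderOf (ZMod.unitsMap hd α) with hm_def
    have hmval : m = oab * p ^ (n - vα - min w (n - vα)) :=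
      order_unitsMap hp hn α oab vα hoab hvα hfact hvy1 hvy2 hd
    have hcond : ∀ k : Fin (orderOf α),
        (((α : ZMod (p ^ n)) ^ (k : ℕ) - 1) * y = 0) ↔ m ∣ (k : ℕ) := by
      intro k
      rw [mul_eq_zero_iff_cast hn hvy2 hyw hyw2 hd, map_sub, map_pow, map_one, sub_eq_zero,
        show (ZMod.castHom hd (ZMod (p ^ (n - w)))) ((α : ZMod (p ^ n)))
          = ((ZMod.unitsMap hd α : (ZMod (p ^ (n - w)))ˣ) : ZMod (p ^ (n - w))) from rfl,
        ← Units.val_pow_eq_pow_val, Units.val_eq_one, hm_def, orderOf_dvd_iff_pow_eq_one]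
    have hmpos : 0 < m := orderOf_pos _
    have hmdvd : m ∣ orderOf α := orderOf_map_dvd _ _
    rw [card_stab_unit_x α x y hxu hyp,
      Nat.card_congr (Equiv.subtypeEquivRight hcond), card_multiples _ m hmdvd hmpos]
    have hOm : orderOf α = m * p ^ (min w (n - vα)) := by
      have hexp : n - vα = (n - vα - min w (n - vα)) + min w (n - vα) := by omega
      rw [hfact, hmval, mul_assoc, ← pow_add, ← hexp]
    rw [hOm, Nat.mul_div_cancel_left _ hmpos, ← pow_add,
      show min w (n - vα) + n = min (n + w) (2 * n - vα) by omega]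
  · -- v x = 0, y = 0
    intro hvx hy0
    have hxu : IsUnit x := by
      rw [isUnit_iff_not_dvd' hn]
      intro hdvd
      have h1 := (hv x 1).mp ⟨by simpa using hdvd, hn⟩
      omega
    subst hy0
    rw [card_stab_unit_x α x 0 hxu (dvd_zero _)]
    have h1 : Nat.card {k : Fin (orderOf α) //
        ((α : ZMod (p ^ n)) ^ (k : ℕ) - 1) * (0 : ZMod (p ^ n)) = 0} = orderOf α := by
      rw [Nat.card_congr (Equiv.subtypeUnivEquiv (fun k => by rw [mul_zero]))]
      simp
    rw [h1, hfact, mul_assoc, ← pow_add]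
    congr 2
    omega
end

section
/- Let g ∈ GL₂(ℤ/p^n) (p odd) have irreducible characteristic polynomial of unit discriminant, and let o_g be the order of g. Then every orbit of the cyclic group ⟨g⟩ acting on W = {(x,y)ᵗ ∈ (ℤ/p^n)² : x or y a unit} has size exactly o_g. -/
open Polynomial Matrix

private lemma aux_isUnit_aeval {F : Type*} [Field F] (N : Matrix (Fin 2) (Fin 2) F)
    (hirr : Irreducible N.charpoly) (f : F[X]) (hf : ¬ N.charpoly ∣ f) :
    IsUnit (Polynomial.aeval N f) := by
  have hmax : (Ideal.span {N.charpoly}).IsMaximal :=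
    PrincipalIdealRing.isMaximal_of_irreducible hirr
  letI : Field (F[X] ⧸ Ideal.span {N.charpoly}) := Ideal.Quotient.field _
  let ψ : F[X] ⧸ Ideal.span {N.charpoly} →+* Matrix (Fin 2) (Fin 2) F :=
    Ideal.Quotient.lift _ (Polynomial.aeval N).toRingHom (by
      intro a ha
      rw [Ideal.mem_span_singleton] at ha
      obtain ⟨c, rfl⟩ := ha
      simp [Matrix.aeval_self_charpoly])
  have hne : (Ideal.Quotient.mk (Ideal.span {N.charpoly}) f) ≠ 0 := by
    rw [Ne, Ideal.Quotient.eq_zero_iff_mem, Ideal.mem_span_singleton]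
    exact hf
  have hu : IsUnit (Ideal.Quotient.mk (Ideal.span {N.charpoly}) f) :=
    isUnit_iff_ne_zero.mpr hne
  have := hu.map ψ
  simpa [ψ, Ideal.Quotient.lift_mk] using this

private lemma aux_combo_unit {F : Type*} [Field F] (N : Matrix (Fin 2) (Fin 2) F)
    (hirr : Irreducible N.charpoly) (a b : F) (hab : ¬(a = 0 ∧ b = 0)) :
    IsUnit (a • N + b • 1) := by
  have hfne : (C a * X + C b : F[X]) ≠ 0 := by
    intro h
    apply hab
    constructor
    · have := congrArg (fun q => Polynomial.coeff q 1) h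
      simpa using this
    · have := congrArg (fun q => Polynomial.coeff q 0) h
      simpa using this
  have hdeg : (N.charpoly).degree = 2 := by
    rw [Matrix.charpoly_degree_eq_dim]
    simp
  have hnd : ¬ N.charpoly ∣ (C a * X + C b) := by
    intro h
    have h2 := Polynomial.degree_le_of_dvd h hfne
    have h1 : (C a * X + C b : F[X]).degree ≤ 1 := Polynomial.degree_linear_le
    rw [hdeg] at h2
    exact absurd (h2.trans h1) (by norm_num)
  have := aux_isUnit_aeval N hirr _ hnd
  have heq : Polynomial.aeval N (C a * X + C b) = a • N + b • 1 := by
    simp [map_add, _root_.map_mul, Polynomial.aeval_X, Polynomial.aeval_C,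
      Algebra.algebraMap_eq_smul_one, smul_mul_assoc, one_mul]
  rwa [heq] at this

private lemma aux_field_ann {F : Type*} [Field F] (N : Matrix (Fin 2) (Fin 2) F)
    (hirr : Irreducible N.charpoly) (v : Fin 2 → F) (hv : v ≠ 0) (a b : F)
    (h : ∀ i, a * (N.mulVec v) i + b * v i = 0) : a = 0 ∧ b = 0 := by
  by_contra hab
  have hu := aux_combo_unit N hirr a b hab
  have hmv : (a • N + b • 1).mulVec v = 0 := by
    funext i
    have := h i
    simp [Matrix.add_mulVec, Matrix.smul_mulVec, Matrix.one_mulVec, Pi.add_apply,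
      Pi.smul_apply, smul_eq_mul, -Matrix.mulVec_fin_two]
    linear_combination this
  obtain ⟨U, hU⟩ := hu
  apply hv
  calc v = ((↑U⁻¹ * ↑U : Matrix (Fin 2) (Fin 2) F)).mulVec v := by
          rw [← Units.val_mul, inv_mul_cancel, Units.val_one, Matrix.one_mulVec]
    _ = (↑U⁻¹ : Matrix (Fin 2) (Fin 2) F).mulVec ((↑U : Matrix (Fin 2) (Fin 2) F).mulVec v) := by
          rw [Matrix.mulVec_mulVec]
    _ = 0 := by rw [hU, hmv, Matrix.mulVec_zero]

/-- Let `p` be an odd prime and `g ∈ GL₂(ℤ/p^n)` whose characteristic polynomial is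
irreducible modulo `p` and has unit discriminant.  Then every orbit of the cyclic group
`⟨g⟩` acting on `W = {(x,y)ᵗ ∈ (ℤ/p^n)² : x or y a unit}` has size exactly the order of
`g`. -/
theorem stmt_19 (p n : ℕ) [Fact p.Prime] (hp : p ≠ 2) (hn : 1 ≤ n)
    (g : GL (Fin 2) (ZMod (p ^ n)))
    (hirr : Irreducible
        (((g : Matrix (Fin 2) (Fin 2) (ZMod (p ^ n))).charpoly).map
          (ZMod.castHom (dvd_pow_self p (Nat.one_le_iff_ne_zero.mp hn)) (ZMod p))))
    (hdisc : IsUnit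
        ((Matrix.trace (g : Matrix (Fin 2) (Fin 2) (ZMod (p ^ n)))) ^ 2 -
          4 * (g : Matrix (Fin 2) (Fin 2) (ZMod (p ^ n))).det)) :
    ∀ w : Fin 2 → ZMod (p ^ n), IsUnit (w 0) ∨ IsUnit (w 1) →
      Nat.card {w' : Fin 2 → ZMod (p ^ n) //
          ∃ m : ℕ, ((g ^ m : GL (Fin 2) (ZMod (p ^ n))) :
            Matrix (Fin 2) (Fin 2) (ZMod (p ^ n))).mulVec w = w'} = orderOf g := by
  have hpp : p.Prime := Fact.out
  haveI : NeZero (p ^ n) := ⟨pow_ne_zero n hpp.ne_zero⟩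
  have hppn : 1 < p ^ n := Nat.one_lt_pow (Nat.one_le_iff_ne_zero.mp hn) hpp.one_lt
  haveI : Fact (1 < p ^ n) := ⟨hppn⟩
  set R := ZMod (p ^ n)
  set φ : ZMod (p ^ n) →+* ZMod p :=
    ZMod.castHom (dvd_pow_self p (Nat.one_le_iff_ne_zero.mp hn)) (ZMod p) with hφ
  set M : Matrix (Fin 2) (Fin 2) (ZMod (p ^ n)) := (g : Matrix (Fin 2) (Fin 2) (ZMod (p ^ n)))
    with hM
  set N : Matrix (Fin 2) (Fin 2) (ZMod p) := M.map φ with hN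
  have hNirr : Irreducible N.charpoly := by
    rw [hN, Matrix.charpoly_map]
    exact hirr
  -- ZMod facts
  have lemC : ∀ k < n, ∀ x : ZMod (p ^ n), (p : ZMod (p ^ n)) ^ k * x = 0 → φ x = 0 := by
    intro k hk x hx
    have h1 : ((p ^ k * x.val : ℕ) : ZMod (p ^ n)) = 0 := by
      push_cast
      rw [ZMod.natCast_val, ZMod.cast_id]
      exact hx
    rw [ZMod.natCast_eq_zero_iff] at h1
    have h2 : p ^ k * p ∣ p ^ k * x.val := by
      refine dvd_trans ?_ h1
      rw [← pow_succ]
      exact pow_dvd_pow p hk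
    have h3 : p ∣ x.val := (Nat.mul_dvd_mul_iff_left (pow_pos hpp.pos k)).mp h2
    have : φ x = ((x.val : ℕ) : ZMod p) := by
      rw [hφ, ZMod.castHom_apply, ← ZMod.natCast_val]
    rw [this, ZMod.natCast_eq_zero_iff]
    exact h3
  have lemD : ∀ x : ZMod (p ^ n), φ x = 0 → ∃ y, x = (p : ZMod (p ^ n)) * y := by
    intro x hx
    have : ((x.val : ℕ) : ZMod p) = 0 := by
      rw [ZMod.natCast_val] at *
      rw [hφ, ZMod.castHom_apply] at hx
      exact hx
    rw [ZMod.natCast_eq_zero_iff] at this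
    obtain ⟨t, ht⟩ := this
    refine ⟨(t : ZMod (p ^ n)), ?_⟩
    have : x = ((x.val : ℕ) : ZMod (p ^ n)) := by rw [ZMod.natCast_val, ZMod.cast_id]
    rw [this, ht]
    push_cast
    ring
  intro w hw
  set u : Fin 2 → ZMod (p ^ n) := M.mulVec w with hu
  set wb : Fin 2 → ZMod p := fun i => φ (w i) with hwb
  have hwbne : wb ≠ 0 := by
    intro h0
    rcases hw with h | h
    · have := (h.map φ).ne_zero
      exact this (congrFun h0 0)
    · have := (h.map φ).ne_zero
      exact this (congrFun h0 1)
  have hub : ∀ i, φ (u i) = (N.mulVec wb) i := by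
    intro i
    simp [hu, hN, hwb, Matrix.mulVec, dotProduct, Fin.sum_univ_two, map_add, _root_.map_mul,
      Matrix.map_apply, -Matrix.mulVec_fin_two]
  -- key annihilation lemma over ZMod (p^n)
  have key : ∀ a b : ZMod (p ^ n), (∀ i, a * u i + b * w i = 0) → a = 0 ∧ b = 0 := by
    intro a b hab
    have main : ∀ k, k ≤ n → (∃ a', a = (p : ZMod (p ^ n)) ^ k * a') ∧
        (∃ b', b = (p : ZMod (p ^ n)) ^ k * b') := by
      intro k
      induction k with
      | zero => intro _; exact ⟨⟨a, by simp⟩, ⟨b, by simp⟩⟩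
      | succ k ih =>
        intro hk1
        have hk : k < n := hk1
        obtain ⟨⟨a', ha'⟩, ⟨b', hb'⟩⟩ := ih (le_of_lt hk)
        have hkill : ∀ i, (p : ZMod (p ^ n)) ^ k * (a' * u i + b' * w i) = 0 := by
          intro i
          have := hab i
          rw [ha', hb'] at this
          linear_combination this
        have hφ0 : ∀ i, φ a' * φ (u i) + φ b' * φ (w i) = 0 := by
          intro i
          have := lemC k hk _ (hkill i)
          simpa [map_add, _root_.map_mul] using this
        have hff : φ a' = 0 ∧ φ b' = 0 := by
          apply aux_field_ann N hNirr wb hwbne (φ a') (φ b')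
          intro i
          rw [← hub i]
          exact hφ0 i
        obtain ⟨a'', ha''⟩ := lemD a' hff.1
        obtain ⟨b'', hb''⟩ := lemD b' hff.2
        constructor
        · exact ⟨a'', by rw [ha', ha'']; ring⟩
        · exact ⟨b'', by rw [hb', hb'']; ring⟩
    obtain ⟨⟨a', ha'⟩, ⟨b', hb'⟩⟩ := main n le_rfl
    have hpn0 : (p : ZMod (p ^ n)) ^ n = 0 := by
      have : ((p ^ n : ℕ) : ZMod (p ^ n)) = 0 := ZMod.natCast_self _
      push_cast at this
      exact this
    exact ⟨by rw [ha', hpn0, zero_mul], by rw [hb', hpn0, zero_mul]⟩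
  -- fixing lemma
  have hfix : ∀ m : ℕ, (M ^ m).mulVec w = w → g ^ m = 1 := by
    intro m hm
    set χ := M.charpoly with hχ
    set r := (X : (ZMod (p ^ n))[X]) ^ m %ₘ χ with hr
    have hrdeg : r.degree ≤ 1 := by
      have h2 := Polynomial.degree_modByMonic_lt ((X : (ZMod (p ^ n))[X]) ^ m)
        (Matrix.charpoly_monic M)
      have hd : χ.degree = 2 := by
        rw [hχ, Matrix.charpoly_degree_eq_dim]; simp
      rw [hd] at h2
      exact Order.le_of_lt_succ (by exact_mod_cast h2)
    have hpow : M ^ m = Polynomial.aeval M r := by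
      have : M ^ m = Polynomial.aeval M ((X : (ZMod (p ^ n))[X]) ^ m) := by
        simp
      rw [this]
      conv_lhs => rw [← Polynomial.modByMonic_add_div ((X : (ZMod (p ^ n))[X]) ^ m)
        M.charpoly]
      rw [map_add, _root_.map_mul, Matrix.aeval_self_charpoly, zero_mul, add_zero]
    set a := r.coeff 1 with ha
    set b := r.coeff 0 with hb
    have hrform : r = C a * X + C b := Polynomial.eq_X_add_C_of_degree_le_one hrdeg
    have hMm : M ^ m = a • M + b • 1 := by
      rw [hpow, hrform]
      simp [map_add, _root_.map_mul, Polynomial.aeval_X, Polynomial.aeval_C,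
        Algebra.algebraMap_eq_smul_one, smul_mul_assoc, one_mul]
    have heq : ∀ i, a * u i + (b - 1) * w i = 0 := by
      intro i
      have h1 := congrFun hm i
      rw [hMm] at h1
      have h2 : (a • M.mulVec w + b • w) i = w i := by
        rw [← h1]
        congr 1
        rw [Matrix.add_mulVec, Matrix.smul_mulVec, Matrix.smul_mulVec,
          Matrix.one_mulVec]
      have h3 : a * u i + b * w i = w i := by
        simpa [hu, Pi.add_apply, Pi.smul_apply, smul_eq_mul, -Matrix.mulVec_fin_two] using h2
      linear_combination h3
    obtain ⟨h0a, h0b⟩ := key a (b - 1) heq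
    have hb1 : b = 1 := by linear_combination h0b
    have : M ^ m = 1 := by
      rw [hMm, h0a, hb1]
      simp
    apply Units.ext
    rw [Units.val_pow_eq_pow_val, Units.val_one]
    exact this
  -- counting
  haveI : Finite (GL (Fin 2) (ZMod (p ^ n))) := by
    infer_instance
  set o := orderOf g with ho
  have hopos : 0 < o := orderOf_pos g
  haveI : NeZero o := ⟨hopos.ne'⟩
  set T := {w' : Fin 2 → ZMod (p ^ n) //
      ∃ m : ℕ, ((g ^ m : GL (Fin 2) (ZMod (p ^ n))) :
        Matrix (Fin 2) (Fin 2) (ZMod (p ^ n))).mulVec w = w'} with hT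
  let f : ZMod o → T := fun m =>
    ⟨((g ^ (m.val) : GL (Fin 2) (ZMod (p ^ n))) :
        Matrix (Fin 2) (Fin 2) (ZMod (p ^ n))).mulVec w, m.val, rfl⟩
  have hcancel : ∀ (h : GL (Fin 2) (ZMod (p ^ n))) (v : Fin 2 → ZMod (p ^ n)),
      ((h⁻¹ : GL (Fin 2) (ZMod (p ^ n))) : Matrix (Fin 2) (Fin 2) (ZMod (p ^ n))).mulVec
        (((h : Matrix (Fin 2) (Fin 2) (ZMod (p ^ n)))).mulVec v) = v := by
    intro h v
    rw [Matrix.mulVec_mulVec, ← Units.val_mul, inv_mul_cancel, Units.val_one,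
      Matrix.one_mulVec]
  have hinj : Function.Injective f := by
    have haux : ∀ i j : ZMod o, i.val ≤ j.val →
        ((g ^ (i.val) : GL (Fin 2) (ZMod (p ^ n))) :
          Matrix (Fin 2) (Fin 2) (ZMod (p ^ n))).mulVec w =
        ((g ^ (j.val) : GL (Fin 2) (ZMod (p ^ n))) :
          Matrix (Fin 2) (Fin 2) (ZMod (p ^ n))).mulVec w → i = j := by
      intro i j hij heq2
      have hsplit : g ^ (j.val) = g ^ (i.val) * g ^ (j.val - i.val) := by
        rw [← pow_add, Nat.add_sub_cancel' hij]
      have : ((g ^ (i.val) : GL (Fin 2) (ZMod (p ^ n))) :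
          Matrix (Fin 2) (Fin 2) (ZMod (p ^ n))).mulVec
            (((g ^ (j.val - i.val) : GL (Fin 2) (ZMod (p ^ n))) :
              Matrix (Fin 2) (Fin 2) (ZMod (p ^ n))).mulVec w) =
          ((g ^ (i.val) : GL (Fin 2) (ZMod (p ^ n))) :
            Matrix (Fin 2) (Fin 2) (ZMod (p ^ n))).mulVec w := by
        rw [Matrix.mulVec_mulVec, ← Units.val_mul, ← hsplit]
        exact heq2.symm
      have hfixw : ((g ^ (j.val - i.val) : GL (Fin 2) (ZMod (p ^ n))) :
          Matrix (Fin 2) (Fin 2) (ZMod (p ^ n))).mulVec w = w := by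
        have := congrArg ((((g ^ (i.val))⁻¹ : GL (Fin 2) (ZMod (p ^ n))) :
            Matrix (Fin 2) (Fin 2) (ZMod (p ^ n))).mulVec) this
        rwa [hcancel, hcancel] at this
      have hg1 : g ^ (j.val - i.val) = 1 := by
        apply hfix
        rw [hM, ← Units.val_pow_eq_pow_val]
        exact hfixw
      have hdvd : o ∣ j.val - i.val := orderOf_dvd_of_pow_eq_one hg1
      have hlt : j.val - i.val < o := lt_of_le_of_lt (Nat.sub_le _ _) (ZMod.val_lt j)
      have h0 : j.val - i.val = 0 := Nat.eq_zero_of_dvd_of_lt hdvd hlt |>.symm ▸ rfl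
      have : j.val ≤ i.val := Nat.sub_eq_zero_iff_le.mp (Nat.eq_zero_of_dvd_of_lt hdvd hlt)
      exact ZMod.val_injective o (le_antisymm hij this)
    intro i j hij
    have heq2 : ((g ^ (i.val) : GL (Fin 2) (ZMod (p ^ n))) :
        Matrix (Fin 2) (Fin 2) (ZMod (p ^ n))).mulVec w =
        ((g ^ (j.val) : GL (Fin 2) (ZMod (p ^ n))) :
        Matrix (Fin 2) (Fin 2) (ZMod (p ^ n))).mulVec w := congrArg Subtype.val hij
    rcases le_total i.val j.val with h | h
    · exact haux i j h heq2
    · exact (haux j i h heq2.symm).symm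
  have hsurj : Function.Surjective f := by
    rintro ⟨w', m, hm⟩
    refine ⟨(m : ZMod o), ?_⟩
    apply Subtype.ext
    show ((g ^ ((m : ZMod o).val) : GL (Fin 2) (ZMod (p ^ n))) :
        Matrix (Fin 2) (Fin 2) (ZMod (p ^ n))).mulVec w = w'
    rw [ZMod.val_natCast]
    have hpm : g ^ (m % o) = g ^ m := pow_mod_orderOf g m
    rw [hpm]
    exact hm
  have hbij : Function.Bijective f := ⟨hinj, hsurj⟩
  rw [← Nat.card_eq_of_bijective f hbij, Nat.card_zmod]
end
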